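/- arXiv:math/0501051 — 2 statements merged into one kernel-verified Lean document; each statement's English description precedes it below -/
import Mathlib

section
/- Every injective simplicial map of the Farey graph to itself is surjective on vertices. -/
/-- Coprime pairs of integers, the "homogeneous coordinates" of Farey vertices. -/
def CoprimePair : Type := {p : ℤ × ℤ // IsCoprime p.1 p.2}

/-- Two coprime pairs are identified when they agree up to an overall sign. -/
def fareySetoid : Setoid CoprimePair where
  r a b := a.val = b.val ∨ a.val = -b.val
  iseqv := by
    constructor
    · intro a; exact Or.inl rfl
    · rintro a b (h | h)
      · exact Or.inl h.symm
      · right; rw [h, neg_neg]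
    · rintro a b c (h | h) (h' | h')
      · exact Or.inl (h.trans h')
      · exact Or.inr (h.trans h')
      · right; rw [h, h']
      · left; rw [h, h', neg_neg]

/-- The vertex set of the Farey graph: coprime pairs of integers up to sign. -/
def Farey : Type := Quotient fareySetoid

/-- The class of a coprime pair in the Farey graph. -/
def Farey.mk (p : CoprimePair) : Farey := Quotient.mk fareySetoid p

/-- Adjacency in the Farey graph: `[(p,q)]` and `[(r,s)]` are adjacent iff `|ps - qr| = 1`. -/
def Farey.Adj (x y : Farey) : Prop :=
  ∃ p q : CoprimePair, x = Farey.mk p ∧ y = Farey.mk q ∧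
    |p.val.1 * q.val.2 - p.val.2 * q.val.1| = 1

namespace FareyAux

open Relation

lemma cop_aux (x y c d : ℤ) (h : x * d - y * c = 1 ∨ x * d - y * c = -1) :
    IsCoprime x y := by
  rcases h with h | h
  · exact ⟨d, -c, by linear_combination h⟩
  · exact ⟨-d, c, by linear_combination -h⟩

lemma coprime_ne_zero {x y : ℤ} (h : IsCoprime x y) : ¬(x = 0 ∧ y = 0) := by
  rintro ⟨rfl, rfl⟩
  obtain ⟨u, v, huv⟩ := h
  simp at huv

lemma mk_eq_mk {p q : CoprimePair} :
    Farey.mk p = Farey.mk q ↔ (p.val = q.val ∨ p.val = -q.val) := by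
  constructor
  · intro h
    exact Quotient.exact h
  · intro h
    exact Quotient.sound h

lemma mk_surj (z : Farey) : ∃ p : CoprimePair, z = Farey.mk p := by
  obtain ⟨a, h⟩ := Quot.exists_rep z
  exact ⟨a, h.symm⟩

lemma det_cases {u v u' v' : ℤ × ℤ} (hu : u = u' ∨ u = -u') (hv : v = v' ∨ v = -v')
    (h : u'.1 * v'.2 - u'.2 * v'.1 = 1 ∨ u'.1 * v'.2 - u'.2 * v'.1 = -1) :
    u.1 * v.2 - u.2 * v.1 = 1 ∨ u.1 * v.2 - u.2 * v.1 = -1 := by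
  rcases hu with rfl | rfl <;> rcases hv with rfl | rfl <;>
    (try simp only [Prod.fst_neg, Prod.snd_neg]) <;>
    rcases h with h | h <;>
    first
      | exact Or.inl (by linear_combination h)
      | exact Or.inl (by linear_combination -h)
      | exact Or.inr (by linear_combination h)
      | exact Or.inr (by linear_combination -h)

lemma adj_mk {p q : CoprimePair} :
    Farey.Adj (Farey.mk p) (Farey.mk q) ↔
      (p.val.1 * q.val.2 - p.val.2 * q.val.1 = 1 ∨
       p.val.1 * q.val.2 - p.val.2 * q.val.1 = -1) := by
  constructor
  · rintro ⟨p', q', hp, hq, hd⟩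
    exact det_cases (mk_eq_mk.mp hp) (mk_eq_mk.mp hq)
      ((abs_eq (by norm_num : (0:ℤ) ≤ 1)).mp hd)
  · intro h
    exact ⟨p, q, rfl, rfl, by rcases h with h | h <;> rw [h] <;> norm_num⟩

lemma adj_symm {x y : Farey} (h : Farey.Adj x y) : Farey.Adj y x := by
  obtain ⟨p, q, rfl, rfl, hd⟩ := h
  refine ⟨q, p, rfl, rfl, ?_⟩
  rw [show q.val.1 * p.val.2 - q.val.2 * p.val.1
      = -(p.val.1 * q.val.2 - p.val.2 * q.val.1) by ring, abs_neg]
  exact hd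

lemma nbr_raw (a b c d x y : ℤ)
    (hpq : a * d - b * c = 1 ∨ a * d - b * c = -1)
    (hpr : a * y - b * x = 1 ∨ a * y - b * x = -1)
    (hqr : c * y - d * x = 1 ∨ c * y - d * x = -1) :
    (x = a + c ∧ y = b + d) ∨ (x = -(a + c) ∧ y = -(b + d)) ∨
    (x = a - c ∧ y = b - d) ∨ (x = -(a - c) ∧ y = -(b - d)) := by
  have hx : x * ((a*d - b*c) * (a*d - b*c))
      = ((a*d - b*c) * (x*d - y*c)) * a + ((a*d - b*c) * (a*y - b*x)) * c := by ring
  have hy : y * ((a*d - b*c) * (a*d - b*c))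
      = ((a*d - b*c) * (x*d - y*c)) * b + ((a*d - b*c) * (a*y - b*x)) * d := by ring
  have h1 : x*d - y*c = -(c*y - d*x) := by ring
  rcases hpq with hD | hD <;> rcases hpr with hB | hB <;> rcases hqr with hA | hA <;>
    (rw [hA] at h1; rw [hD, hB, h1] at hx hy; norm_num at hx hy; omega)

/-- the two base points -/
def e10 : CoprimePair := ⟨(1, 0), isCoprime_one_left⟩
def e01 : CoprimePair := ⟨(0, 1), isCoprime_one_right⟩
def E1 : Farey := Farey.mk e10
def E2 : Farey := Farey.mk e01

lemma adjE : Farey.Adj E1 E2 :=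
  adj_mk.mpr (Or.inl (by norm_num [e10, e01]))

lemma two_nbrs {x y : Farey} (h : Farey.Adj x y) :
    ∃ t₁ t₂ : Farey, t₁ ≠ t₂ ∧ Farey.Adj x t₁ ∧ Farey.Adj y t₁ ∧
      Farey.Adj x t₂ ∧ Farey.Adj y t₂ ∧
      ∀ z, Farey.Adj x z → Farey.Adj y z → z = t₁ ∨ z = t₂ := by
  obtain ⟨p, q, rfl, rfl, hd⟩ := h
  obtain ⟨⟨a, b⟩, hp⟩ := p
  obtain ⟨⟨c, d⟩, hq⟩ := q
  have hd' : a * d - b * c = 1 ∨ a * d - b * c = -1 :=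
    (abs_eq (by norm_num : (0:ℤ) ≤ 1)).mp hd
  have hcop1 : IsCoprime (a + c) (b + d) := by
    apply cop_aux _ _ c d
    rcases hd' with h | h
    · exact Or.inl (by linear_combination h)
    · exact Or.inr (by linear_combination h)
  have hcop2 : IsCoprime (a - c) (b - d) := by
    apply cop_aux _ _ c d
    rcases hd' with h | h
    · exact Or.inl (by linear_combination h)
    · exact Or.inr (by linear_combination h)
  refine ⟨Farey.mk ⟨(a + c, b + d), hcop1⟩, Farey.mk ⟨(a - c, b - d), hcop2⟩,
    ?_, ?_, ?_, ?_, ?_, ?_⟩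
  · intro heq
    rcases mk_eq_mk.mp heq with h | h
    · have h' : a + c = a - c ∧ b + d = b - d := by
        simpa [Prod.ext_iff] using h
      have : c = 0 ∧ d = 0 := by omega
      exact coprime_ne_zero hq this
    · have h' : a + c = -(a - c) ∧ b + d = -(b - d) := by
        simpa [Prod.ext_iff] using h
      have : a = 0 ∧ b = 0 := by omega
      exact coprime_ne_zero hp this
  · apply adj_mk.mpr
    rcases hd' with h | h
    · exact Or.inl (by linear_combination h)
    · exact Or.inr (by linear_combination h)
  · apply adj_mk.mpr
    rcases hd' with h | h
    · exact Or.inr (by linear_combination -h)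
    · exact Or.inl (by linear_combination -h)
  · apply adj_mk.mpr
    rcases hd' with h | h
    · exact Or.inr (by linear_combination -h)
    · exact Or.inl (by linear_combination -h)
  · apply adj_mk.mpr
    rcases hd' with h | h
    · exact Or.inr (by linear_combination -h)
    · exact Or.inl (by linear_combination -h)
  · intro z hz1 hz2
    obtain ⟨r, rfl⟩ := mk_surj z
    replace hz1 := adj_mk.mp hz1
    replace hz2 := adj_mk.mp hz2
    obtain ⟨⟨xx, yy⟩, hr⟩ := r
    have := nbr_raw a b c d xx yy hd' hz1 hz2
    rcases this with ⟨h1, h2⟩ | ⟨h1, h2⟩ | ⟨h1, h2⟩ | ⟨h1, h2⟩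
    · exact Or.inl (mk_eq_mk.mpr (Or.inl (by simp [Prod.ext_iff, h1, h2])))
    · exact Or.inl (mk_eq_mk.mpr (Or.inr (by simp [Prod.ext_iff, h1, h2])))
    · exact Or.inr (mk_eq_mk.mpr (Or.inl (by simp [Prod.ext_iff, h1, h2])))
    · exact Or.inr (mk_eq_mk.mpr (Or.inr (by simp [Prod.ext_iff, h1, h2])))

/-- elementary moves between edges of the Farey graph -/
inductive Move : Farey × Farey → Farey × Farey → Prop
  | swap (x y : Farey) : Move (x, y) (y, x)
  | tri (x y z : Farey) : Farey.Adj x z → Farey.Adj y z → Move (x, y) (x, z)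

lemma move_symm_edge {e e' : Farey × Farey} (h : Farey.Adj e.1 e.2) (hm : Move e e') :
    Farey.Adj e'.1 e'.2 ∧ Move e' e := by
  cases hm with
  | swap x y => exact ⟨adj_symm h, Move.swap y x⟩
  | tri x y z hxz hyz => exact ⟨hxz, Move.tri x z y h (adj_symm hyz)⟩

lemma rtg_symm {e e' : Farey × Farey} (h : Farey.Adj e.1 e.2)
    (hr : ReflTransGen Move e e') :
    Farey.Adj e'.1 e'.2 ∧ ReflTransGen Move e' e := by
  induction hr with
  | refl => exact ⟨h, ReflTransGen.refl⟩
  | tail _ hm ih =>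
    obtain ⟨hb, hba⟩ := ih
    obtain ⟨hc, hcb⟩ := move_symm_edge hb hm
    exact ⟨hc, ReflTransGen.head hcb hba⟩

lemma key_ineq (a b c d : ℤ) (hcop : IsCoprime c d)
    (hdet : a * d - b * c = 1 ∨ a * d - b * c = -1)
    (hle : c.natAbs + d.natAbs ≤ a.natAbs + b.natAbs)
    (h2 : 2 ≤ a.natAbs + b.natAbs) :
    (a - c).natAbs + (b - d).natAbs < a.natAbs + b.natAbs ∨
    (a + c).natAbs + (b + d).natAbs < a.natAbs + b.natAbs := by
  by_contra hcon
  push_neg at hcon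
  obtain ⟨h3, h4⟩ := hcon
  have hle' : |c| + |d| ≤ |a| + |b| := by
    rw [Int.abs_eq_natAbs, Int.abs_eq_natAbs, Int.abs_eq_natAbs, Int.abs_eq_natAbs]
    exact_mod_cast hle
  have h2' : (2:ℤ) ≤ |a| + |b| := by
    rw [Int.abs_eq_natAbs, Int.abs_eq_natAbs]
    exact_mod_cast h2
  rcases lt_or_ge a.natAbs c.natAbs with hca | hca
  · have hca' : |a| + 1 ≤ |c| := by
      rw [Int.abs_eq_natAbs, Int.abs_eq_natAbs]
      exact_mod_cast hca
    have habs : |b * c| - |a * d| ≤ 1 := by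
      have h5 : |b * c - a * d| = 1 := by
        rcases hdet with h | h
        · rw [show b * c - a * d = -(a * d - b * c) by ring, h]; norm_num
        · rw [show b * c - a * d = -(a * d - b * c) by ring, h]; norm_num
      calc |b * c| - |a * d| ≤ |b * c - a * d| := abs_sub_abs_le_abs_sub _ _
        _ = 1 := h5
    rw [abs_mul, abs_mul] at habs
    have k1 : (0:ℤ) ≤ |a| * ((|a| + |b|) - (|c| + |d|)) :=
      mul_nonneg (abs_nonneg a) (by linarith)
    have k2 : (0:ℤ) ≤ (|c| - |a| - 1) * (|a| + |b|) :=
      mul_nonneg (by linarith) (by linarith)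
    nlinarith [k1, k2, habs, h2']
  rcases lt_or_ge b.natAbs d.natAbs with hdb | hdb
  · have hdb' : |b| + 1 ≤ |d| := by
      rw [Int.abs_eq_natAbs, Int.abs_eq_natAbs]
      exact_mod_cast hdb
    have habs : |a * d| - |b * c| ≤ 1 := by
      have h5 : |a * d - b * c| = 1 := by
        rcases hdet with h | h <;> rw [h] <;> norm_num
      calc |a * d| - |b * c| ≤ |a * d - b * c| := abs_sub_abs_le_abs_sub _ _
        _ = 1 := h5
    rw [abs_mul, abs_mul] at habs
    have k1 : (0:ℤ) ≤ |b| * ((|a| + |b|) - (|c| + |d|)) :=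
      mul_nonneg (abs_nonneg b) (by linarith)
    have k2 : (0:ℤ) ≤ (|d| - |b| - 1) * (|a| + |b|) :=
      mul_nonneg (by linarith) (by linarith)
    nlinarith [k1, k2, habs, h2']
  · have hcd : c.natAbs = d.natAbs := by omega
    rcases eq_or_ne c 0 with rfl | hc0
    · have hd0 : d = 0 := by omega
      subst hd0
      rcases hdet with h | h <;> simp at h
    · have hg : Int.gcd c d = 1 := Int.isCoprime_iff_gcd_eq_one.mp hcop
      have hgcd : Int.gcd c d = Nat.gcd c.natAbs d.natAbs := rfl
      rw [hgcd, hcd, Nat.gcd_self] at hg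
      have hc1 : c = 1 ∨ c = -1 := by omega
      have hd1 : d = 1 ∨ d = -1 := by omega
      rcases hc1 with rfl | rfl <;> rcases hd1 with rfl | rfl <;>
        rcases hdet with h | h <;> (ring_nf at h; omega)

/-- norm of a coprime pair -/
def nrm (p : CoprimePair) : ℕ := p.val.1.natAbs + p.val.2.natAbs

set_option maxHeartbeats 1000000 in
lemma conn (n : ℕ) : ∀ p q : CoprimePair, nrm p + nrm q ≤ n →
    (p.val.1 * q.val.2 - p.val.2 * q.val.1 = 1 ∨
     p.val.1 * q.val.2 - p.val.2 * q.val.1 = -1) →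
    ReflTransGen Move (E1, E2) (Farey.mk p, Farey.mk q) := by
  induction n using Nat.strong_induction_on with
  | _ n ih =>
    intro p q hn hd
    obtain ⟨⟨a, b⟩, hp⟩ := p
    obtain ⟨⟨c, d⟩, hq⟩ := q
    simp only [nrm] at hn
    by_cases hbase : a.natAbs + b.natAbs ≤ 1 ∧ c.natAbs + d.natAbs ≤ 1
    · -- base case
      have hpnz := coprime_ne_zero hp
      have hqnz := coprime_ne_zero hq
      have ha : (a = 0 ∧ (b = 1 ∨ b = -1)) ∨ (b = 0 ∧ (a = 1 ∨ a = -1)) := by omega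
      have hc : (c = 0 ∧ (d = 1 ∨ d = -1)) ∨ (d = 0 ∧ (c = 1 ∨ c = -1)) := by omega
      rcases ha with ⟨rfl, hb⟩ | ⟨rfl, haa⟩
      · rcases hc with ⟨rfl, hdd⟩ | ⟨rfl, hcc⟩
        · exfalso; rcases hd with h | h <;> simp at h
        · -- p on second axis, q on first axis: target (E2, E1)
          have hpe : Farey.mk ⟨(0, b), hp⟩ = E2 := by
            apply mk_eq_mk.mpr
            rcases hb with rfl | rfl
            · exact Or.inl rfl
            · exact Or.inr (by norm_num [e01, Prod.ext_iff])
          have hqe : Farey.mk ⟨(c, 0), hq⟩ = E1 := by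
            apply mk_eq_mk.mpr
            rcases hcc with rfl | rfl
            · exact Or.inl rfl
            · exact Or.inr (by norm_num [e10, Prod.ext_iff])
          rw [hpe, hqe]
          exact ReflTransGen.single (Move.swap E1 E2)
      · rcases hc with ⟨rfl, hdd⟩ | ⟨rfl, hcc⟩
        · have hpe : Farey.mk ⟨(a, 0), hp⟩ = E1 := by
            apply mk_eq_mk.mpr
            rcases haa with rfl | rfl
            · exact Or.inl rfl
            · exact Or.inr (by norm_num [e10, Prod.ext_iff])
          have hqe : Farey.mk ⟨(0, d), hq⟩ = E2 := by
            apply mk_eq_mk.mpr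
            rcases hdd with rfl | rfl
            · exact Or.inl rfl
            · exact Or.inr (by norm_num [e01, Prod.ext_iff])
          rw [hpe, hqe]
        · exfalso; rcases hd with h | h <;> simp at h
    · by_cases hle : c.natAbs + d.natAbs ≤ a.natAbs + b.natAbs
      · -- p is the bigger one; replace p
        have h2 : 2 ≤ a.natAbs + b.natAbs := by omega
        rcases key_ineq a b c d hq hd hle h2 with hlt | hlt
        · -- use p' = (a - c, b - d)
          have hdp' : (a - c) * d - (b - d) * c = 1 ∨ (a - c) * d - (b - d) * c = -1 := by
            rcases hd with h | h
            · exact Or.inl (by linear_combination h)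
            · exact Or.inr (by linear_combination h)
          have hcp' : IsCoprime (a - c) (b - d) := cop_aux _ _ c d hdp'
          have path := ih (n - 1) (by omega) ⟨(a - c, b - d), hcp'⟩ ⟨(c, d), hq⟩
            (by simp only [nrm]; omega) hdp'
          have m2 : Move (Farey.mk ⟨(c, d), hq⟩, Farey.mk ⟨(a - c, b - d), hcp'⟩)
              (Farey.mk ⟨(c, d), hq⟩, Farey.mk ⟨(a, b), hp⟩) := by
            apply Move.tri
            · apply adj_mk.mpr
              rcases hd with h | h
              · exact Or.inr (by linear_combination -h)
              · exact Or.inl (by linear_combination -h)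
            · apply adj_mk.mpr
              rcases hd with h | h
              · exact Or.inl (by linear_combination h)
              · exact Or.inr (by linear_combination h)
          exact ((path.tail (Move.swap _ _)).tail m2).tail (Move.swap _ _)
        · -- use p' = (a + c, b + d)
          have hdp' : (a + c) * d - (b + d) * c = 1 ∨ (a + c) * d - (b + d) * c = -1 := by
            rcases hd with h | h
            · exact Or.inl (by linear_combination h)
            · exact Or.inr (by linear_combination h)
          have hcp' : IsCoprime (a + c) (b + d) := cop_aux _ _ c d hdp'
          have path := ih (n - 1) (by omega) ⟨(a + c, b + d), hcp'⟩ ⟨(c, d), hq⟩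
            (by simp only [nrm]; omega) hdp'
          have m2 : Move (Farey.mk ⟨(c, d), hq⟩, Farey.mk ⟨(a + c, b + d), hcp'⟩)
              (Farey.mk ⟨(c, d), hq⟩, Farey.mk ⟨(a, b), hp⟩) := by
            apply Move.tri
            · apply adj_mk.mpr
              rcases hd with h | h
              · exact Or.inr (by linear_combination -h)
              · exact Or.inl (by linear_combination -h)
            · apply adj_mk.mpr
              rcases hd with h | h
              · exact Or.inr (by linear_combination -h)
              · exact Or.inl (by linear_combination -h)
          exact ((path.tail (Move.swap _ _)).tail m2).tail (Move.swap _ _)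
      · -- q is the bigger one; replace q
        push_neg at hle
        have hpnz := coprime_ne_zero hp
        have h2 : 2 ≤ c.natAbs + d.natAbs := by omega
        have hd' : c * b - d * a = 1 ∨ c * b - d * a = -1 := by
          rcases hd with h | h
          · exact Or.inr (by linear_combination -h)
          · exact Or.inl (by linear_combination -h)
        rcases key_ineq c d a b hp hd' (by omega) h2 with hlt | hlt
        · -- q' = (c - a, d - b)
          have hdq' : a * (d - b) - b * (c - a) = 1 ∨ a * (d - b) - b * (c - a) = -1 := by
            rcases hd with h | h
            · exact Or.inl (by linear_combination h)
            · exact Or.inr (by linear_combination h)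
          have hcq' : IsCoprime (c - a) (d - b) := by
            apply cop_aux _ _ a b
            rcases hd' with h | h
            · exact Or.inl (by linear_combination h)
            · exact Or.inr (by linear_combination h)
          have path := ih (n - 1) (by omega) ⟨(a, b), hp⟩ ⟨(c - a, d - b), hcq'⟩
            (by simp only [nrm]; omega) hdq'
          have m : Move (Farey.mk ⟨(a, b), hp⟩, Farey.mk ⟨(c - a, d - b), hcq'⟩)
              (Farey.mk ⟨(a, b), hp⟩, Farey.mk ⟨(c, d), hq⟩) := by
            apply Move.tri
            · exact adj_mk.mpr hd
            · apply adj_mk.mpr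
              rcases hd with h | h
              · exact Or.inr (by linear_combination -h)
              · exact Or.inl (by linear_combination -h)
          exact path.tail m
        · -- q' = (c + a, d + b)
          have hdq' : a * (d + b) - b * (c + a) = 1 ∨ a * (d + b) - b * (c + a) = -1 := by
            rcases hd with h | h
            · exact Or.inl (by linear_combination h)
            · exact Or.inr (by linear_combination h)
          have hcq' : IsCoprime (c + a) (d + b) := by
            apply cop_aux _ _ a b
            rcases hd' with h | h
            · exact Or.inl (by linear_combination h)
            · exact Or.inr (by linear_combination h)
          have path := ih (n - 1) (by omega) ⟨(a, b), hp⟩ ⟨(c + a, d + b), hcq'⟩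
            (by simp only [nrm]; omega) hdq'
          have m : Move (Farey.mk ⟨(a, b), hp⟩, Farey.mk ⟨(c + a, d + b), hcq'⟩)
              (Farey.mk ⟨(a, b), hp⟩, Farey.mk ⟨(c, d), hq⟩) := by
            apply Move.tri
            · exact adj_mk.mpr hd
            · apply adj_mk.mpr
              rcases hd with h | h
              · exact Or.inl (by linear_combination h)
              · exact Or.inr (by linear_combination h)
          exact path.tail m

/-- edges realized as images of edges under φ -/
def GoodEdge (φ : Farey → Farey) (e : Farey × Farey) : Prop :=
  ∃ u v : Farey, Farey.Adj u v ∧ φ u = e.1 ∧ φ v = e.2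

lemma good_move (φ : Farey → Farey) (hφinj : Function.Injective φ)
    (hφadj : ∀ x y : Farey, Farey.Adj x y → Farey.Adj (φ x) (φ y))
    {e e' : Farey × Farey} (hg : GoodEdge φ e) (hm : Move e e') : GoodEdge φ e' := by
  cases hm with
  | swap x y =>
    obtain ⟨u, v, huv, h1, h2⟩ := hg
    exact ⟨v, u, adj_symm huv, h2, h1⟩
  | tri x y z hxz hyz =>
    obtain ⟨u, v, huv, h1, h2⟩ := hg
    replace h1 : φ u = x := h1
    replace h2 : φ v = y := h2
    obtain ⟨t₁, t₂, hne, ha1, ha2, ha3, ha4, _⟩ := two_nbrs huv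
    have hxy : Farey.Adj x y := by
      rw [← h1, ← h2]; exact hφadj _ _ huv
    obtain ⟨s₁, s₂, hsne, _, _, _, _, hclass⟩ := two_nbrs hxy
    have hft1x : Farey.Adj x (φ t₁) := by rw [← h1]; exact hφadj _ _ ha1
    have hft1y : Farey.Adj y (φ t₁) := by rw [← h2]; exact hφadj _ _ ha2
    have hft2x : Farey.Adj x (φ t₂) := by rw [← h1]; exact hφadj _ _ ha3
    have hft2y : Farey.Adj y (φ t₂) := by rw [← h2]; exact hφadj _ _ ha4
    have e1 : φ t₁ = s₁ ∨ φ t₁ = s₂ := hclass _ hft1x hft1y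
    have e2 : φ t₂ = s₁ ∨ φ t₂ = s₂ := hclass _ hft2x hft2y
    have hztz : z = s₁ ∨ z = s₂ := hclass z hxz hyz
    have hfne : φ t₁ ≠ φ t₂ := fun hh => hne (hφinj hh)
    have hz : z = φ t₁ ∨ z = φ t₂ := by
      rcases hztz with rfl | rfl <;> rcases e1 with h1' | h1' <;> rcases e2 with h2' | h2' <;>
        first
          | exact absurd (h1'.trans h2'.symm) hfne
          | exact Or.inl h1'.symm
          | exact Or.inr h2'.symm
    rcases hz with rfl | rfl
    · exact ⟨u, t₁, ha1, h1, rfl⟩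
    · exact ⟨u, t₂, ha3, h1, rfl⟩

lemma good_rtg (φ : Farey → Farey) (hφinj : Function.Injective φ)
    (hφadj : ∀ x y : Farey, Farey.Adj x y → Farey.Adj (φ x) (φ y))
    {e e' : Farey × Farey} (hg : GoodEdge φ e) (hr : ReflTransGen Move e e') :
    GoodEdge φ e' := by
  induction hr with
  | refl => exact hg
  | tail _ hm ih => exact good_move φ hφinj hφadj ih hm

end FareyAux

/-- Every injective simplicial map of the Farey graph to itself is
surjective on vertices. -/
theorem farey_injective_simplicial_map_surjective
    (φ : Farey → Farey)
    (hφinj : Function.Injective φ)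
    (hφadj : ∀ x y : Farey, Farey.Adj x y → Farey.Adj (φ x) (φ y)) :
    Function.Surjective φ := by
  intro w
  obtain ⟨r, rfl⟩ := FareyAux.mk_surj w
  -- build an edge containing r
  obtain ⟨u0, v0, huv⟩ := r.2
  have hscop : IsCoprime (-v0) u0 := ⟨-r.val.2, r.val.1, by linear_combination huv⟩
  set s : CoprimePair := ⟨(-v0, u0), hscop⟩ with hs
  have hdrs : r.val.1 * s.val.2 - r.val.2 * s.val.1 = 1 ∨
      r.val.1 * s.val.2 - r.val.2 * s.val.1 = -1 := by
    left
    show r.val.1 * u0 - r.val.2 * (-v0) = 1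
    linear_combination huv
  -- the image of the base edge
  have hA : Farey.Adj (φ FareyAux.E1) (φ FareyAux.E2) := hφadj _ _ FareyAux.adjE
  obtain ⟨p0, q0, h1, h2, hd0⟩ := hA
  have hd0' := (abs_eq (by norm_num : (0:ℤ) ≤ 1)).mp hd0
  have path1 : Relation.ReflTransGen FareyAux.Move (FareyAux.E1, FareyAux.E2)
      (φ FareyAux.E1, φ FareyAux.E2) := by
    have := FareyAux.conn (FareyAux.nrm p0 + FareyAux.nrm q0) p0 q0 le_rfl hd0'
    rw [← h1, ← h2] at this
    exact this
  have path1' := (FareyAux.rtg_symm FareyAux.adjE path1).2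
  have path2 : Relation.ReflTransGen FareyAux.Move (FareyAux.E1, FareyAux.E2)
      (Farey.mk r, Farey.mk s) :=
    FareyAux.conn (FareyAux.nrm r + FareyAux.nrm s) r s le_rfl hdrs
  have total := path1'.trans path2
  have hgood : FareyAux.GoodEdge φ (φ FareyAux.E1, φ FareyAux.E2) :=
    ⟨FareyAux.E1, FareyAux.E2, FareyAux.adjE, rfl, rfl⟩
  obtain ⟨u, v, -, hu, -⟩ := FareyAux.good_rtg φ hφinj hφadj hgood total
  exact ⟨u, hu⟩
end

section
/- Let n ≥ 3 and let (t_{i,j})_{1 ≤ i < j ≤ n+1} be any family of integers. There is a unique group endomorphism ρ of the pure braid group P_{n+1} satisfying ρ(A_{i,j}) = A_{i,j} z^{t_{i,j}} for all 1 ≤ i < j ≤ n+1, and ρ is injective if and only if 1 + Σ_{i<j} t_{i,j} ≠ 0. -/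
def braidRels (n : ℕ) : Set (FreeGroup (Fin n)) :=
  {r | (∃ i j : Fin n, (i : ℕ) + 1 = (j : ℕ) ∧
          r = .of i * .of j * .of i * (.of j * .of i * .of j)⁻¹) ∨
       (∃ i j : Fin n, (i : ℕ) + 2 ≤ (j : ℕ) ∧
          r = .of i * .of j * (.of j * .of i)⁻¹)}

abbrev BraidGroup (n : ℕ) : Type := PresentedGroup (braidRels n)

def braidGen {n : ℕ} (i : Fin n) : BraidGroup n := PresentedGroup.of i

def fullTwist (n : ℕ) : BraidGroup n :=
  ((List.ofFn fun i : Fin n => braidGen i).prod) ^ (n + 1)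

/-- The canonical surjection `B_{n+1} → S_{n+1}`, sending `σ_i` to the transposition
`(i, i+1)`. -/
def braidToPerm (n : ℕ) : BraidGroup n →* Equiv.Perm (Fin (n + 1)) :=
  PresentedGroup.toGroup (f := fun i : Fin n => Equiv.swap i.castSucc i.succ) (by
    rintro r (⟨i, j, hij, rfl⟩ | ⟨i, j, hij, rfl⟩) <;>
      simp only [map_mul, map_inv, FreeGroup.lift_apply_of, mul_inv_eq_one]
    · -- braid relation
      set a := i.castSucc
      set b := i.succ
      set d := j.succ
      have hcb : j.castSucc = b := by
        simp only [Fin.ext_iff, Fin.coe_castSucc, Fin.val_succ, a, b] at *; omega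
      rw [hcb]
      have hab : a ≠ b := by simp [a, b, Fin.ext_iff]
      have had : a ≠ d := by simp [a, d, Fin.ext_iff]; omega
      have hdb : d ≠ b := by simp [d, b, Fin.ext_iff]; omega
      have hda : d ≠ a := had.symm
      calc Equiv.swap a b * Equiv.swap b d * Equiv.swap a b
          = Equiv.swap b a * Equiv.swap d b * Equiv.swap b a := by
            rw [Equiv.swap_comm a b, Equiv.swap_comm b d]
        _ = Equiv.swap a d := Equiv.swap_mul_swap_mul_swap hdb hda
        _ = Equiv.swap d a := Equiv.swap_comm a d
        _ = Equiv.swap b d * Equiv.swap a b * Equiv.swap b d :=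
            (Equiv.swap_mul_swap_mul_swap hab had).symm
    · -- commutation relation
      have hd : (Equiv.swap i.castSucc i.succ).Disjoint (Equiv.swap j.castSucc j.succ) := by
        intro x
        by_cases hx : x = i.castSucc ∨ x = i.succ
        · right
          apply Equiv.swap_apply_of_ne_of_ne <;>
            (rcases hx with hx | hx <;> subst hx <;> simp [Fin.ext_iff] <;> omega)
        · push_neg at hx
          left
          exact Equiv.swap_apply_of_ne_of_ne hx.1 hx.2
      exact hd.commute.eq)

/-- The pure braid group `P_{n+1}`: the kernel of the canonical surjection
`B_{n+1} → S_{n+1}`. -/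
def PureBraidGroup (n : ℕ) : Subgroup (BraidGroup n) := (braidToPerm n).ker

/-- The generator `σ_{k+1}` of the braid group, defined for a natural number index
(`1` when out of range). -/
def sgen (n : ℕ) (k : ℕ) : BraidGroup n :=
  if h : k < n then braidGen ⟨k, h⟩ else 1

/-- The word `σ_{b-1} σ_{b-2} ⋯ σ_{a+1}` (0-based indices) used to build the Artin
generators of the pure braid group. -/
def conjWord (n a b : ℕ) : BraidGroup n :=
  (((List.range' (a + 1) (b - 1 - a)).reverse).map (sgen n)).prod

/-- The Artin generator `A_{a,b} = (σ_{b-1} ⋯ σ_{a+1}) σ_a² (σ_{b-1} ⋯ σ_{a+1})⁻¹`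
of the pure braid group (0-based indices `a < b ≤ n`, corresponding to the classical
`A_{i,j}` with `i = a+1`, `j = b+1`). -/
def Agen (n a b : ℕ) : BraidGroup n :=
  conjWord n a b * (sgen n a) ^ 2 * (conjWord n a b)⁻¹

lemma braidToPerm_sgen_sq (n a : ℕ) : braidToPerm n (sgen n a) ^ 2 = 1 := by
  unfold sgen
  split
  · simp [braidGen, braidToPerm, sq, Equiv.swap_mul_self]
  · simp

lemma Agen_mem_ker (n a b : ℕ) : Agen n a b ∈ (braidToPerm n).ker := by
  rw [MonoidHom.mem_ker]
  unfold Agen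
  rw [map_mul, map_mul, map_inv, map_pow, braidToPerm_sgen_sq]
  group

/-- The Artin generator `A_{a,b}` as an element of the pure braid group. -/
def pureGen (n a b : ℕ) : ↥(PureBraidGroup n) :=
  ⟨Agen n a b, Agen_mem_ker n a b⟩

lemma fullTwist_mem_ker (n : ℕ) : fullTwist n ∈ (braidToPerm n).ker := by
  rw [MonoidHom.mem_ker]
  have hlist : List.ofFn (fun i : Fin n => Equiv.swap i.castSucc i.succ) =
      List.zipWith Equiv.swap (List.finRange (n + 1)) (List.finRange (n + 1)).tail := by
    apply List.ext_getElem
    · simp [Nat.min_def]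
    · intro k h1 h2
      simp only [List.getElem_ofFn, List.getElem_zipWith, List.getElem_tail,
        List.getElem_finRange]
      congr 1
  have hmap : braidToPerm n ((List.ofFn fun i : Fin n => braidGen i).prod) =
      (List.finRange (n + 1)).formPerm := by
    rw [map_list_prod, List.map_ofFn]
    have : ((braidToPerm n) ∘ fun i : Fin n => braidGen i) =
        fun i : Fin n => Equiv.swap i.castSucc i.succ := by
      funext i
      simp [braidGen, braidToPerm]
    rw [this, hlist]
    rfl
  have hpow : (List.finRange (n + 1)).formPerm ^ (n + 1) = 1 := by
    have h := List.formPerm_pow_length_eq_one_of_nodup (l := List.finRange (n + 1))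
      (List.nodup_finRange (n + 1))
    simpa using h
  unfold fullTwist
  rw [map_pow, hmap, hpow]

/-- The full twist `z` as an element of the pure braid group; it generates the center of
both `B_{n+1}` and `P_{n+1}`. -/
def pureTwist (n : ℕ) : ↥(PureBraidGroup n) :=
  ⟨fullTwist n, fullTwist_mem_ker n⟩

namespace BraidAux

open Subgroup

variable {n : ℕ}

lemma braid_conj {G : Type*} [Group G] {a b : G} (h : a * b * a = b * a * b) :
    a * b * a⁻¹ = b⁻¹ * (a * b) := by
  rw [eq_inv_mul_iff_mul_eq, show b * (a * b * a⁻¹) = b * a * b * a⁻¹ by group, ← h]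
  group

lemma mk_rel_one {r : FreeGroup (Fin n)} (hr : r ∈ braidRels n) :
    PresentedGroup.mk (braidRels n) r = 1 := by
  have : r ∈ Subgroup.normalClosure (braidRels n) := Subgroup.subset_normalClosure hr
  exact (QuotientGroup.eq_one_iff r).mpr this

lemma braidGen_braid {i j : Fin n} (h : (i : ℕ) + 1 = (j : ℕ)) :
    braidGen i * braidGen j * braidGen i = braidGen j * braidGen i * braidGen j := by
  have h1 := mk_rel_one (n := n) (Or.inl ⟨i, j, h, rfl⟩)
  simp only [map_mul, map_inv, mul_inv_eq_one] at h1
  exact h1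

lemma braidGen_comm {i j : Fin n} (h : (i : ℕ) + 2 ≤ (j : ℕ)) :
    Commute (braidGen i) (braidGen j) := by
  have h1 := mk_rel_one (n := n) (Or.inr ⟨i, j, h, rfl⟩)
  simp only [map_mul, map_inv, mul_inv_eq_one] at h1
  exact h1

lemma sgen_braid {k : ℕ} (h : k + 1 < n) :
    sgen n k * sgen n (k + 1) * sgen n k = sgen n (k + 1) * sgen n k * sgen n (k + 1) := by
  have hk : k < n := by omega
  rw [sgen, sgen, dif_pos hk, dif_pos h]
  exact braidGen_braid rfl

lemma sgen_braid' {k : ℕ} (h : k + 1 < n) :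
    sgen n k * sgen n (k + 1) * (sgen n k)⁻¹ =
      (sgen n (k + 1))⁻¹ * (sgen n k * sgen n (k + 1)) :=
  braid_conj (sgen_braid h)

lemma sgen_comm {i j : ℕ} (h : i + 2 ≤ j) : Commute (sgen n i) (sgen n j) := by
  rcases lt_or_ge j n with hj | hj
  · have hi : i < n := by omega
    rw [show sgen n i = braidGen ⟨i, hi⟩ from dif_pos hi,
      show sgen n j = braidGen ⟨j, hj⟩ from dif_pos hj]
    exact braidGen_comm h
  · rw [show sgen n j = 1 from dif_neg (by omega)]
    exact Commute.one_right _

end BraidAux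
namespace BraidAux

variable {n : ℕ}

/-- ascending word `σ_i σ_{i+1} ⋯ σ_{m-1}`. -/
def wordE (n i m : ℕ) : BraidGroup n := ((List.range' i (m - i)).map (sgen n)).prod

lemma wordE_nil {i m : ℕ} (h : m ≤ i) : wordE n i m = 1 := by
  rw [wordE, Nat.sub_eq_zero_of_le h]
  simp

lemma wordE_cons {i m : ℕ} (h : i < m) : wordE n i m = sgen n i * wordE n (i + 1) m := by
  rw [wordE, wordE, show m - i = (m - (i+1)) + 1 by omega, List.range'_succ]
  simp

lemma wordE_concat {i c m : ℕ} (h1 : i ≤ c) (h2 : c ≤ m) :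
    wordE n i m = wordE n i c * wordE n c m := by
  rw [wordE, wordE, wordE, ← List.prod_append, ← List.map_append]
  congr 1
  have := List.range'_append (s := i) (m := c - i) (n := m - c) (step := 1)
  simp only [one_mul, mul_one] at this
  rw [show i + (c - i) = c by omega] at this
  rw [show m - i = c - i + (m - c) by omega, ← this]

lemma wordE_snoc {i m : ℕ} (h : i < m) : wordE n i m = wordE n i (m - 1) * sgen n (m - 1) := by
  rw [wordE_concat (c := m - 1) (by omega) (by omega)]
  congr 1
  rw [wordE, show m - (m-1) = 1 by omega]
  simp

lemma wordE_single (i : ℕ) : wordE n i (i + 1) = sgen n i := by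
  rw [wordE_cons (by omega), wordE_nil (le_refl _), mul_one]

lemma commute_wordE {k i m : ℕ} (h : ∀ l, i ≤ l → l < m → Commute (sgen n k) (sgen n l)) :
    Commute (sgen n k) (wordE n i m) := by
  apply Commute.list_prod_right
  intro x hx
  simp only [List.mem_map, List.mem_range'_1] at hx
  obtain ⟨l, ⟨hl1, hl2⟩, rfl⟩ := hx
  exact h l hl1 (by omega)

lemma commute_wordE_lt {k i m : ℕ} (h : k + 2 ≤ i) : Commute (sgen n k) (wordE n i m) :=
  commute_wordE fun l hl _ => sgen_comm (by omega)

lemma commute_wordE_gt {k i m : ℕ} (h : m + 1 ≤ k) : Commute (sgen n k) (wordE n i m) :=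
  commute_wordE fun l _ hl => (sgen_comm (j := k) (by omega)).symm

/-- shift: `σ_k (σ_i ⋯ σ_{m-1}) = (σ_i ⋯ σ_{m-1}) σ_{k-1}` for `i < k < m ≤ n`-ish. -/
lemma sgen_wordE_shift {k i m : ℕ} (h1 : i < k) (h2 : k < m) (hk : k < n) :
    sgen n k * wordE n i m = wordE n i m * sgen n (k - 1) := by
  have e1 : wordE n i m = wordE n i (k + 1) * wordE n (k + 1) m :=
    wordE_concat (by omega) (by omega)
  have e2 : wordE n i (k + 1) = wordE n i (k - 1) * sgen n (k - 1) * sgen n k := by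
    rw [wordE_snoc (m := k + 1) (by omega), Nat.add_sub_cancel,
      wordE_snoc (m := k) (by omega)]
  have hb : sgen n (k - 1) * sgen n k * sgen n (k - 1) = sgen n k * sgen n (k - 1) * sgen n k := by
    have := sgen_braid (n := n) (k := k - 1) (by omega)
    rw [show k - 1 + 1 = k by omega] at this
    exact this
  have c1 : Commute (sgen n k) (wordE n i (k - 1)) := commute_wordE_gt (by omega)
  have c2 : Commute (sgen n (k - 1)) (wordE n (k + 1) m) := commute_wordE_lt (by omega)
  calc sgen n k * wordE n i m
      = (sgen n k * wordE n i (k - 1)) * (sgen n (k - 1) * sgen n k) * wordE n (k + 1) m := by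
        rw [e1, e2]; group
    _ = wordE n i (k - 1) * (sgen n k * sgen n (k - 1) * sgen n k) * wordE n (k + 1) m := by
        rw [c1.eq]; group
    _ = wordE n i (k - 1) * (sgen n (k - 1) * sgen n k * sgen n (k - 1)) * wordE n (k + 1) m := by
        rw [← hb]
    _ = wordE n i (k + 1) * (sgen n (k - 1) * wordE n (k + 1) m) := by rw [e2]; group
    _ = wordE n i m * sgen n (k - 1) := by rw [c2.eq, e1]; group

/-- band lemma: `(σ_i ⋯ σ_{j-1}) σ_j (σ_i ⋯ σ_{j-1})⁻¹ = (σ_{i+1} ⋯ σ_j)⁻¹ σ_i (σ_{i+1} ⋯ σ_j)`. -/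
lemma band_lemma {i j : ℕ} (h1 : i ≤ j) (hj : j < n) :
    wordE n i j * sgen n j * (wordE n i j)⁻¹ =
      (wordE n (i + 1) (j + 1))⁻¹ * sgen n i * wordE n (i + 1) (j + 1) := by
  induction j, h1 using Nat.le_induction with
  | base =>
      rw [wordE_nil (le_refl i), wordE_nil (by omega)]
      group
  | succ j hij ih =>
      have hjn : j < n := by omega
      have e1 : wordE n i (j + 1) = wordE n i j * sgen n j := by
        rw [wordE_snoc (by omega), Nat.add_sub_cancel]
      have hb : sgen n j * sgen n (j + 1) * (sgen n j)⁻¹ =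
          (sgen n (j + 1))⁻¹ * (sgen n j * sgen n (j + 1)) := sgen_braid' hj
      have c1 : Commute (sgen n (j + 1)) (wordE n i j) := commute_wordE_gt (by omega)
      have c1' : Commute ((sgen n (j + 1))⁻¹) (wordE n i j) := c1.inv_left
      calc wordE n i (j + 1) * sgen n (j + 1) * (wordE n i (j + 1))⁻¹
          = wordE n i j * (sgen n j * sgen n (j + 1) * (sgen n j)⁻¹) * (wordE n i j)⁻¹ := by
            rw [e1]; group
        _ = wordE n i j * ((sgen n (j + 1))⁻¹ * (sgen n j * sgen n (j + 1))) * (wordE n i j)⁻¹ := by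
            rw [hb]
        _ = (wordE n i j * (sgen n (j + 1))⁻¹) * sgen n j * (sgen n (j + 1) * (wordE n i j)⁻¹) := by
            group
        _ = (sgen n (j + 1))⁻¹ * (wordE n i j * sgen n j * (wordE n i j)⁻¹) * sgen n (j + 1) := by
            rw [← c1'.eq, c1.inv_right.eq]; group
        _ = (sgen n (j + 1))⁻¹ * ((wordE n (i + 1) (j + 1))⁻¹ * sgen n i * wordE n (i + 1) (j + 1)) * sgen n (j + 1) := by
            rw [ih hjn]
        _ = (wordE n (i + 1) (j + 1 + 1))⁻¹ * sgen n i * wordE n (i + 1) (j + 1 + 1) := by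
            rw [wordE_snoc (i := i + 1) (m := j + 2) (by omega),
              show j + 2 - 1 = j + 1 by omega]
            group

end BraidAux
namespace BraidAux

variable {n : ℕ}

lemma conj_conj {G : Type*} [Group G] {g w x : G} (hc : Commute g w) :
    g * (w * x * w⁻¹) * g⁻¹ = w * (g * x * g⁻¹) * w⁻¹ := by
  have h2 : w⁻¹ * g⁻¹ = g⁻¹ * w⁻¹ := by rw [← mul_inv_rev, ← mul_inv_rev, hc.eq]
  calc g * (w * x * w⁻¹) * g⁻¹ = (g * w) * x * (w⁻¹ * g⁻¹) := by group
    _ = (w * g) * x * (g⁻¹ * w⁻¹) := by rw [hc.eq, h2]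
    _ = w * (g * x * g⁻¹) * w⁻¹ := by group

lemma conj_eq_of_commute {G : Type*} [Group G] {g x : G} (hc : Commute g x) :
    g * x * g⁻¹ = x := by rw [hc.eq]; group

lemma conjWord_nil {a b : ℕ} (h : b ≤ a + 1) : conjWord n a b = 1 := by
  rw [conjWord, show b - 1 - a = 0 by omega]
  simp

lemma conjWord_top {a b : ℕ} (h : a + 1 < b) :
    conjWord n a b = sgen n (b - 1) * conjWord n a (b - 1) := by
  rw [conjWord, conjWord, show b - 1 - a = (b - 1 - 1 - a) + 1 by omega,
    List.range'_concat, show a + 1 + 1 * (b - 1 - 1 - a) = b - 1 by omega]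
  simp

lemma conjWord_bot {a b : ℕ} (h : a + 1 < b) :
    conjWord n a b = conjWord n (a + 1) b * sgen n (a + 1) := by
  rw [conjWord, conjWord, show b - 1 - a = (b - 1 - (a + 1)) + 1 by omega,
    List.range'_succ]
  simp

lemma conjWord_concat {a c b : ℕ} (h1 : a ≤ c) (h2 : c < b) :
    conjWord n a b = conjWord n c b * conjWord n a (c + 1) := by
  rw [conjWord, conjWord, conjWord, ← List.prod_append, ← List.map_append,
    ← List.reverse_append]
  congr 2
  have := List.range'_append (s := a + 1) (m := c - a) (n := b - 1 - c) (step := 1)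
  simp only [one_mul, mul_one] at this
  rw [show a + 1 + (c - a) = c + 1 by omega] at this
  rw [show b - 1 - a = c - a + (b - 1 - c) by omega, ← this,
    show c + 1 - 1 - a = c - a by omega]

lemma commute_conjWord {k a b : ℕ}
    (h : ∀ l, a + 1 ≤ l → l ≤ b - 1 → Commute (sgen n k) (sgen n l)) :
    Commute (sgen n k) (conjWord n a b) := by
  apply Commute.list_prod_right
  intro x hx
  simp only [List.mem_map, List.mem_reverse, List.mem_range'_1] at hx
  obtain ⟨l, ⟨hl1, hl2⟩, rfl⟩ := hx
  exact h l hl1 (by omega)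

lemma commute_conjWord_lt {k a b : ℕ} (h : k + 1 ≤ a) : Commute (sgen n k) (conjWord n a b) :=
  commute_conjWord fun l hl _ => sgen_comm (by omega)

lemma commute_conjWord_gt {k a b : ℕ} (h : b < k) : Commute (sgen n k) (conjWord n a b) :=
  commute_conjWord fun l hl1 hl2 => by
    rcases le_or_gt b (a + 1) with hb | hb
    · omega
    · exact (sgen_comm (i := l) (j := k) (by omega)).symm

lemma conj_Agen_commute {k a b : ℕ} (hc : Commute (sgen n k) (conjWord n a b))
    (hca : Commute (sgen n k) (sgen n a)) :
    sgen n k * Agen n a b * (sgen n k)⁻¹ = Agen n a b := by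
  rw [Agen, conj_conj hc, conj_eq_of_commute (hca.pow_right 2)]

lemma conj_Agen_far_lt {k a b : ℕ} (h : k + 2 ≤ a) :
    sgen n k * Agen n a b * (sgen n k)⁻¹ = Agen n a b :=
  conj_Agen_commute (commute_conjWord_lt (by omega)) (sgen_comm (by omega))

lemma conj_Agen_far_gt {k a b : ℕ} (hab : a < b) (h : b < k) :
    sgen n k * Agen n a b * (sgen n k)⁻¹ = Agen n a b :=
  conj_Agen_commute (commute_conjWord_gt h) ((sgen_comm (i := a) (j := k) (by omega)).symm)

/-- Case `k = b`: `σ_b A(a,b) σ_b⁻¹ = A(a,b+1)`. -/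
lemma conj_Agen_top {a b : ℕ} (hab : a < b) :
    sgen n b * Agen n a b * (sgen n b)⁻¹ = Agen n a (b + 1) := by
  rw [Agen, Agen, conjWord_top (a := a) (b := b + 1) (by omega), Nat.add_sub_cancel]
  group

lemma Agen_adj (k : ℕ) : Agen n k (k + 1) = sgen n k ^ 2 := by
  rw [Agen, conjWord_nil (by omega)]
  group

/-- Case `k = b - 1 > a`. -/
lemma conj_Agen_sub_top {a b : ℕ} (hab : a + 1 < b) :
    sgen n (b - 1) * Agen n a b * (sgen n (b - 1))⁻¹ =
      Agen n (b - 1) b * Agen n a (b - 1) * (Agen n (b - 1) b)⁻¹ := by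
  have hadj := Agen_adj (n := n) (b - 1)
  rw [show b - 1 + 1 = b by omega] at hadj
  rw [hadj, Agen, Agen, conjWord_top hab]
  simp only [pow_two]
  group

/-- Case `k = a = b - 1`. -/
lemma conj_Agen_self {a : ℕ} :
    sgen n a * Agen n a (a + 1) * (sgen n a)⁻¹ = Agen n a (a + 1) := by
  rw [Agen_adj]
  simp only [pow_two]
  group

/-- Case `k = a < b - 1`: gives `A(a+1, b)`. -/
lemma conj_Agen_eq_bot {a b : ℕ} (hab : a + 1 < b) (hb : b ≤ n) :
    sgen n a * Agen n a b * (sgen n a)⁻¹ = Agen n (a + 1) b := by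
  have hc : Commute (sgen n a) (conjWord n (a + 1) b) := commute_conjWord_lt (by omega)
  have hbr : sgen n a * sgen n (a + 1) * sgen n a = sgen n (a + 1) * sgen n a * sgen n (a + 1) :=
    sgen_braid (by omega)
  have key : sgen n a * (sgen n (a + 1) * sgen n a ^ 2 * (sgen n (a + 1))⁻¹) * (sgen n a)⁻¹ =
      sgen n (a + 1) ^ 2 := by
    have h2 : sgen n a * sgen n (a + 1) * sgen n a * sgen n a =
        sgen n (a + 1) * sgen n (a + 1) * (sgen n a * sgen n (a + 1)) := by
      rw [hbr, show sgen n (a+1) * sgen n a * sgen n (a+1) * sgen n a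
          = sgen n (a+1) * (sgen n a * sgen n (a+1) * sgen n a) by group, hbr]
      group
    simp only [pow_two]
    calc sgen n a * (sgen n (a + 1) * (sgen n a * sgen n a) * (sgen n (a + 1))⁻¹) * (sgen n a)⁻¹
        = (sgen n a * sgen n (a + 1) * sgen n a * sgen n a) * (sgen n a * sgen n (a + 1))⁻¹ := by
          group
      _ = sgen n (a + 1) * sgen n (a + 1) := by rw [h2]; group
  have e : Agen n a b = conjWord n (a + 1) b *
      (sgen n (a + 1) * sgen n a ^ 2 * (sgen n (a + 1))⁻¹) * (conjWord n (a + 1) b)⁻¹ := by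
    rw [Agen, conjWord_bot hab]
    group
  rw [e, conj_conj hc, key, Agen]

/-- Case `k + 1 = a`: gives `A(a,b)⁻¹ A(a-1,b) A(a,b)`. -/
lemma conj_Agen_eq_sub_bot {k b : ℕ} (hab : k + 1 < b) (hb : b ≤ n) :
    sgen n k * Agen n (k + 1) b * (sgen n k)⁻¹ =
      (Agen n (k + 1) b)⁻¹ * Agen n k b * Agen n (k + 1) b := by
  have hc : Commute (sgen n k) (conjWord n (k + 1) b) := commute_conjWord_lt (by omega)
  have hbr : sgen n k * sgen n (k + 1) * (sgen n k)⁻¹ =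
      (sgen n (k + 1))⁻¹ * (sgen n k * sgen n (k + 1)) := sgen_braid' (by omega)
  have inner : sgen n k * (sgen n (k + 1) * sgen n (k + 1)) * (sgen n k)⁻¹ =
      (sgen n (k + 1))⁻¹ * (sgen n k * sgen n k) * sgen n (k + 1) := by
    calc sgen n k * (sgen n (k + 1) * sgen n (k + 1)) * (sgen n k)⁻¹
        = (sgen n k * sgen n (k + 1) * (sgen n k)⁻¹) *
            (sgen n k * sgen n (k + 1) * (sgen n k)⁻¹) := by group
      _ = (sgen n (k + 1))⁻¹ * (sgen n k * sgen n (k + 1)) *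
            ((sgen n (k + 1))⁻¹ * (sgen n k * sgen n (k + 1))) := by rw [hbr]
      _ = (sgen n (k + 1))⁻¹ * (sgen n k * sgen n k) * sgen n (k + 1) := by group
  have hw : conjWord n k b = conjWord n (k + 1) b * sgen n (k + 1) := conjWord_bot hab
  have eL : Agen n (k + 1) b = conjWord n (k + 1) b *
      (sgen n (k + 1) * sgen n (k + 1)) * (conjWord n (k + 1) b)⁻¹ := by
    rw [Agen, pow_two]
  rw [eL, conj_conj hc, inner, Agen, hw]
  simp only [pow_two]
  group

/-- Case `a < k < b - 1`: commutes. -/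
lemma conj_Agen_mid {k a b : ℕ} (ha : a < k) (hb : k + 1 < b) (hbn : b ≤ n) :
    sgen n k * Agen n a b * (sgen n k)⁻¹ = Agen n a b := by
  have hw : conjWord n a b =
      conjWord n (k + 1) b * sgen n (k + 1) * sgen n k * conjWord n a k := by
    rw [conjWord_concat (a := a) (c := k + 1) (by omega) (by omega),
      conjWord_top (a := a) (b := k + 2) (by omega), show k + 2 - 1 = k + 1 by omega,
      conjWord_top (a := a) (b := k + 1) (by omega), Nat.add_sub_cancel]
    group
  have hbr : sgen n k * sgen n (k + 1) * sgen n k = sgen n (k + 1) * sgen n k * sgen n (k + 1) :=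
    sgen_braid (by omega)
  have c1 : Commute (sgen n k) (conjWord n (k + 1) b) := commute_conjWord_lt (by omega)
  have c2 : Commute (sgen n (k + 1)) (conjWord n a k) := commute_conjWord_gt (by omega)
  have hshift : sgen n k * conjWord n a b = conjWord n a b * sgen n (k + 1) := by
    calc sgen n k * conjWord n a b
        = (sgen n k * conjWord n (k + 1) b) * (sgen n (k + 1) * sgen n k) * conjWord n a k := by
          rw [hw]; group
      _ = conjWord n (k + 1) b * (sgen n k * sgen n (k + 1) * sgen n k) * conjWord n a k := by
          rw [c1.eq]; group
      _ = conjWord n (k + 1) b * sgen n (k + 1) * sgen n k * (sgen n (k + 1) * conjWord n a k) := by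
          rw [hbr]; group
      _ = conjWord n a b * sgen n (k + 1) := by
          rw [c2.eq, hw]; group
  have hshift' : (conjWord n a b)⁻¹ * (sgen n k)⁻¹ = (sgen n (k + 1))⁻¹ * (conjWord n a b)⁻¹ := by
    rw [← mul_inv_rev, hshift, mul_inv_rev]
  have hca : Commute (sgen n (k + 1)) ((sgen n a) ^ 2) := (sgen_comm (by omega)).symm.pow_right 2
  calc sgen n k * Agen n a b * (sgen n k)⁻¹
      = (sgen n k * conjWord n a b) * sgen n a ^ 2 * ((conjWord n a b)⁻¹ * (sgen n k)⁻¹) := by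
        rw [Agen]; group
    _ = (conjWord n a b * sgen n (k + 1)) * sgen n a ^ 2 *
          ((sgen n (k + 1))⁻¹ * (conjWord n a b)⁻¹) := by rw [hshift, hshift']
    _ = conjWord n a b * (sgen n (k + 1) * sgen n a ^ 2 * (sgen n (k + 1))⁻¹) *
          (conjWord n a b)⁻¹ := by group
    _ = Agen n a b := by rw [conj_eq_of_commute hca, Agen]

end BraidAux
namespace BraidAux

variable {n : ℕ}

/-- The set of Artin generators. -/
def Aset (n : ℕ) : Set (BraidGroup n) := {g | ∃ a b : ℕ, a < b ∧ b ≤ n ∧ g = Agen n a b}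

/-- The subgroup generated by the Artin generators. -/
def HA (n : ℕ) : Subgroup (BraidGroup n) := Subgroup.closure (Aset n)

lemma Agen_mem_HA {a b : ℕ} (hab : a < b) (hb : b ≤ n) : Agen n a b ∈ HA n :=
  Subgroup.subset_closure ⟨a, b, hab, hb, rfl⟩

lemma sgen_sq_mem_HA {k : ℕ} (hk : k < n) : sgen n k ^ 2 ∈ HA n := by
  rw [← Agen_adj]
  exact Agen_mem_HA (by omega) (by omega)

lemma conj_Agen_mem {k a b : ℕ} (hk : k < n) (hab : a < b) (hb : b ≤ n) :
    sgen n k * Agen n a b * (sgen n k)⁻¹ ∈ HA n := by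
  rcases lt_or_ge (k + 2) a with h1 | h1
  · rw [conj_Agen_far_lt (by omega)]; exact Agen_mem_HA hab hb
  rcases eq_or_lt_of_le h1 with h2 | h2
  · rw [conj_Agen_far_lt (by omega)]; exact Agen_mem_HA hab hb
  -- now k + 2 > a, i.e. k + 1 ≥ a
  rcases Nat.lt_or_ge k a with h3 | h3
  · -- k + 1 = a
    have hka : a = k + 1 := by omega
    subst hka
    rcases eq_or_lt_of_le (Nat.succ_le_of_lt hab) with h4 | h4
    · -- b = k + 2 : adjacent case, k = a - 1 = (b-1) - 1 not special; still use eq_sub_bot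
      rw [conj_Agen_eq_sub_bot (by omega) hb]
      exact Subgroup.mul_mem _ (Subgroup.mul_mem _
        (Subgroup.inv_mem _ (Agen_mem_HA hab hb)) (Agen_mem_HA (by omega) hb))
        (Agen_mem_HA hab hb)
    · rw [conj_Agen_eq_sub_bot (by omega) hb]
      exact Subgroup.mul_mem _ (Subgroup.mul_mem _
        (Subgroup.inv_mem _ (Agen_mem_HA hab hb)) (Agen_mem_HA (by omega) hb))
        (Agen_mem_HA hab hb)
  rcases eq_or_lt_of_le h3 with h4 | h4
  · -- k = a
    rcases eq_or_lt_of_le (Nat.succ_le_of_lt hab) with h5 | h5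
    · -- b = a + 1
      subst h4; rw [← h5, conj_Agen_self]; rw [← h5] at hb; exact Agen_mem_HA (by omega) hb
    · subst h4; rw [conj_Agen_eq_bot h5 hb]; exact Agen_mem_HA (by omega) hb
  -- now a < k
  rcases Nat.lt_or_ge (k + 1) b with h5 | h5
  · rw [conj_Agen_mid h4 h5 hb]; exact Agen_mem_HA hab hb
  rcases eq_or_lt_of_le h5 with h6 | h6
  · -- k = b - 1
    have : k = b - 1 := by omega
    subst this
    rw [conj_Agen_sub_top (by omega)]
    exact Subgroup.mul_mem _ (Subgroup.mul_mem _ (Agen_mem_HA (by omega) hb)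
      (Agen_mem_HA (by omega) (by omega))) (Subgroup.inv_mem _ (Agen_mem_HA (by omega) hb))
  rcases Nat.lt_or_ge k b with h7 | h7
  · omega
  rcases eq_or_lt_of_le h7 with h8 | h8
  · -- k = b
    subst h8
    rw [conj_Agen_top hab]
    exact Agen_mem_HA (by omega) (by omega)
  · rw [conj_Agen_far_gt hab h8]; exact Agen_mem_HA hab hb

lemma conj_mem_HA {k : ℕ} (hk : k < n) {h : BraidGroup n} (hh : h ∈ HA n) :
    sgen n k * h * (sgen n k)⁻¹ ∈ HA n := by
  induction hh using Subgroup.closure_induction with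
  | mem x hx =>
      obtain ⟨a, b, hab, hb, rfl⟩ := hx
      exact conj_Agen_mem hk hab hb
  | one => simpa using Subgroup.one_mem _
  | mul x y hx hy ihx ihy =>
      have : sgen n k * (x * y) * (sgen n k)⁻¹ =
          (sgen n k * x * (sgen n k)⁻¹) * (sgen n k * y * (sgen n k)⁻¹) := by group
      rw [this]
      exact Subgroup.mul_mem _ ihx ihy
  | inv x hx ihx =>
      have : sgen n k * x⁻¹ * (sgen n k)⁻¹ = (sgen n k * x * (sgen n k)⁻¹)⁻¹ := by group
      rw [this]
      exact Subgroup.inv_mem _ ihx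

lemma conj_mem_HA' {k : ℕ} (hk : k < n) {h : BraidGroup n} (hh : h ∈ HA n) :
    (sgen n k)⁻¹ * h * sgen n k ∈ HA n := by
  have e : (sgen n k)⁻¹ * h * sgen n k =
      (sgen n k ^ 2)⁻¹ * (sgen n k * h * (sgen n k)⁻¹) * sgen n k ^ 2 := by
    simp only [pow_two]; group
  rw [e]
  exact Subgroup.mul_mem _ (Subgroup.mul_mem _ (Subgroup.inv_mem _ (sgen_sq_mem_HA hk))
    (conj_mem_HA hk hh)) (sgen_sq_mem_HA hk)

lemma closure_braidGen_top :
    Subgroup.closure (Set.range (braidGen : Fin n → BraidGroup n)) = ⊤ :=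
  PresentedGroup.closure_range_of (braidRels n)

instance HA_normal : (HA n).Normal := by
  rw [← Subgroup.normalizer_eq_top_iff, ← top_le_iff, ← closure_braidGen_top]
  rw [Subgroup.closure_le]
  rintro x ⟨i, rfl⟩
  rw [SetLike.mem_coe, Subgroup.mem_normalizer_iff]
  intro h
  have hi : (i : ℕ) < n := i.isLt
  have hbg : braidGen i = sgen n (i : ℕ) := by
    rw [sgen, dif_pos hi]
  constructor
  · intro hh
    rw [hbg]
    exact conj_mem_HA hi hh
  · intro hh
    have := conj_mem_HA' hi hh
    rw [hbg] at *
    have e : sgen n (i:ℕ) * h * (sgen n (i:ℕ))⁻¹ = sgen n (i:ℕ) * h * (sgen n (i:ℕ))⁻¹ := rfl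
    have e2 : h = (sgen n (i:ℕ))⁻¹ * (sgen n (i:ℕ) * h * (sgen n (i:ℕ))⁻¹) * sgen n (i:ℕ) := by
      group
    rw [show h = (sgen n (i:ℕ))⁻¹ * (sgen n (i:ℕ) * h * (sgen n (i:ℕ))⁻¹) * sgen n (i:ℕ) from by group]
    exact conj_mem_HA' hi hh

lemma HA_le_ker : HA n ≤ PureBraidGroup n := by
  rw [HA, Subgroup.closure_le]
  rintro x ⟨a, b, hab, hb, rfl⟩
  exact Agen_mem_ker n a b

end BraidAux
namespace BraidAux

variable {n : ℕ}

lemma swap_val {N : ℕ} (u v x : Fin N) :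
    ((Equiv.swap u v) x : ℕ) = if x = u then (v : ℕ) else if x = v then (u : ℕ) else (x : ℕ) := by
  rw [Equiv.swap_apply_def]
  split_ifs <;> rfl

lemma braidToPerm_sgen {k : ℕ} (hk : k < n) :
    braidToPerm n (sgen n k) =
      Equiv.swap (⟨k, by omega⟩ : Fin (n + 1)) ⟨k + 1, by omega⟩ := by
  rw [sgen, dif_pos hk]
  show braidToPerm n (braidGen ⟨k, hk⟩) = _
  rw [braidGen, braidToPerm, PresentedGroup.toGroup.of]
  congr 1

lemma permE_val {i m : ℕ} (him : i ≤ m) (hm : m ≤ n) (x : Fin (n + 1)) :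
    ((braidToPerm n (wordE n i m)) x : ℕ) =
      if (x : ℕ) = m then i else if i ≤ (x : ℕ) ∧ (x : ℕ) < m then (x : ℕ) + 1 else (x : ℕ) := by
  induction m, him using Nat.le_induction generalizing x with
  | base =>
      rw [wordE_nil (le_refl i), map_one]
      simp only [Equiv.Perm.one_apply]
      split_ifs <;> omega
  | succ m him ih =>
      have hm' : m ≤ n := by omega
      rw [wordE_snoc (by omega : i < m + 1), Nat.add_sub_cancel, map_mul,
        Equiv.Perm.mul_apply, braidToPerm_sgen (by omega : m < n)]
      have hsw := swap_val (⟨m, by omega⟩ : Fin (n + 1)) ⟨m + 1, by omega⟩ x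
      simp only [Fin.ext_iff] at hsw
      rw [ih hm']
      simp only [hsw]
      split_ifs <;> omega

lemma permE_val_gt {i m : ℕ} (him : i ≤ m) (hm : m ≤ n) (x : Fin (n + 1)) (hx : m < (x : ℕ)) :
    braidToPerm n (wordE n i m) x = x := by
  apply Fin.ext
  rw [permE_val him hm]
  split_ifs <;> omega

lemma permE_top {i m : ℕ} (him : i ≤ m) (hm : m ≤ n) :
    braidToPerm n (wordE n i m) ⟨m, by omega⟩ = ⟨i, by omega⟩ := by
  apply Fin.ext
  rw [permE_val him hm]
  simp

lemma conjPerm_vals {a b : ℕ} (hab : a + 1 ≤ b) (hb : b ≤ n) :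
    braidToPerm n (conjWord n a b) ⟨a, by omega⟩ = ⟨a, by omega⟩ ∧
      braidToPerm n (conjWord n a b) ⟨a + 1, by omega⟩ = ⟨b, by omega⟩ := by
  induction b, hab using Nat.le_induction with
  | base =>
      rw [conjWord_nil (le_refl _), map_one]
      exact ⟨rfl, rfl⟩
  | succ b hab ih =>
      obtain ⟨ih1, ih2⟩ := ih (by omega)
      rw [conjWord_top (by omega : a + 1 < b + 1), Nat.add_sub_cancel, map_mul,
        braidToPerm_sgen (by omega : b < n)]
      constructor
      · rw [Equiv.Perm.mul_apply, ih1]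
        apply Equiv.swap_apply_of_ne_of_ne <;> (rw [Fin.ne_iff_vne]; simp; omega)
      · rw [Equiv.Perm.mul_apply, ih2]
        exact Equiv.swap_apply_left _ _

end BraidAux
namespace BraidAux

variable {n : ℕ}
open Fin.NatCast

/-- Canonical section of `braidToPerm`, by levels. -/
def secAux (n : ℕ) : ℕ → Equiv.Perm (Fin (n + 1)) → BraidGroup n
  | 0, _ => 1
  | m + 1, p =>
      wordE n ((p ((m + 1 : ℕ) : Fin (n + 1))) : ℕ) (m + 1) *
        secAux n m
          ((braidToPerm n (wordE n ((p ((m + 1 : ℕ) : Fin (n + 1))) : ℕ) (m + 1)))⁻¹ * p)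

lemma secAux_succ (m : ℕ) (p : Equiv.Perm (Fin (n + 1))) :
    secAux n (m + 1) p =
      wordE n ((p ((m + 1 : ℕ) : Fin (n + 1))) : ℕ) (m + 1) *
        secAux n m
          ((braidToPerm n (wordE n ((p ((m + 1 : ℕ) : Fin (n + 1))) : ℕ) (m + 1)))⁻¹ * p) := rfl

lemma secAux_one : ∀ m, m ≤ n → secAux n m 1 = 1 := by
  intro m
  induction m with
  | zero => intro _; rfl
  | succ m ih =>
      intro hm
      rw [secAux_succ]
      have hcv : (((m + 1 : ℕ) : Fin (n + 1)) : ℕ) = m + 1 := Fin.val_cast_of_lt (by omega)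
      simp only [Equiv.Perm.one_apply, hcv]
      rw [wordE_nil (le_refl _), map_one, inv_one, one_mul, mul_one]
      exact ih (by omega)

lemma pc_le {m : ℕ} (hm : m + 1 ≤ n) (p : Equiv.Perm (Fin (n + 1)))
    (hp : ∀ x : Fin (n + 1), m + 1 < (x : ℕ) → p x = x) :
    ((p ((m + 1 : ℕ) : Fin (n + 1))) : ℕ) ≤ m + 1 := by
  by_contra h
  push_neg at h
  have h1 : p (p ((m + 1 : ℕ) : Fin (n + 1))) = p ((m + 1 : ℕ) : Fin (n + 1)) := hp _ h
  have h2 := p.injective h1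
  rw [h2] at h
  rw [Fin.val_cast_of_lt (by omega : m + 1 < n + 1)] at h
  omega

lemma q_fix {m : ℕ} (hm : m + 1 ≤ n) (p : Equiv.Perm (Fin (n + 1)))
    (hp : ∀ x : Fin (n + 1), m + 1 < (x : ℕ) → p x = x) :
    ∀ x : Fin (n + 1), m < (x : ℕ) →
      ((braidToPerm n (wordE n ((p ((m + 1 : ℕ) : Fin (n + 1))) : ℕ) (m + 1)))⁻¹ * p) x = x := by
  have hj := pc_le hm p hp
  set c : Fin (n + 1) := ((m + 1 : ℕ) : Fin (n + 1)) with hcdef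
  have hcv : (c : ℕ) = m + 1 := Fin.val_cast_of_lt (by omega)
  intro x hx
  rcases eq_or_lt_of_le (show m + 1 ≤ (x : ℕ) by omega) with h | h
  · have hxc : x = c := by apply Fin.ext; omega
    rw [hxc, Equiv.Perm.mul_apply]
    have h1 : braidToPerm n (wordE n ((p c : Fin (n+1)) : ℕ) (m + 1)) c = p c := by
      have h2 := permE_val (n := n) (i := ((p c : Fin (n+1)) : ℕ)) (m := m + 1) hj hm c
      rw [hcv, if_pos rfl] at h2
      exact Fin.ext h2
    rw [Equiv.Perm.inv_def, Equiv.symm_apply_eq]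
    exact h1.symm
  · have hpx : p x = x := hp x h
    have hWx : braidToPerm n (wordE n ((p c : Fin (n+1)) : ℕ) (m + 1)) x = x :=
      permE_val_gt hj hm x h
    conv_lhs => rw [Equiv.Perm.mul_apply, hpx, ← hWx]
    rw [Equiv.Perm.inv_def, Equiv.symm_apply_apply]

lemma secAux_spec : ∀ m, m ≤ n → ∀ p : Equiv.Perm (Fin (n + 1)),
    (∀ x : Fin (n + 1), m < (x : ℕ) → p x = x) → braidToPerm n (secAux n m p) = p := by
  intro m
  induction m with
  | zero =>
      intro _ p hp
      have hp0 : p 0 = 0 := by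
        by_contra h
        have h1 : p (p 0) = p 0 := hp _ (by
          rcases Nat.eq_zero_or_pos ((p 0 : Fin (n+1)) : ℕ) with h2 | h2
          · exact absurd (Fin.ext (by simpa using h2) : p 0 = 0) h
          · omega)
        have := p.injective h1
        exact h (by rw [this])
      have hone : p = 1 := by
        apply Equiv.ext
        intro x
        rcases Nat.eq_zero_or_pos ((x : Fin (n+1)) : ℕ) with h2 | h2
        · rw [show x = 0 from Fin.ext (by simpa using h2), hp0]; rfl
        · rw [hp x h2]; rfl
      rw [hone]
      rfl
  | succ m ih =>
      intro hm p hp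
      rw [secAux_succ, map_mul]
      rw [ih (by omega) _ (q_fix hm p hp)]
      group

lemma key_lemma : ∀ m, m ≤ n → ∀ k, k < m → ∀ p : Equiv.Perm (Fin (n + 1)),
    (∀ x : Fin (n + 1), m < (x : ℕ) → p x = x) →
    sgen n k * secAux n m p * (secAux n m (braidToPerm n (sgen n k) * p))⁻¹ ∈ HA n := by
  intro m
  induction m with
  | zero => intro _ k hk; omega
  | succ m ih =>
      intro hm k hk p hp
      set c : Fin (n + 1) := ((m + 1 : ℕ) : Fin (n + 1)) with hcdef
      have hcv : (c : ℕ) = m + 1 := Fin.val_cast_of_lt (by omega)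
      have hkn : k < n := by omega
      set S := braidToPerm n (sgen n k) with hSdef
      have hSval : ∀ y : Fin (n + 1), (S y : ℕ) =
          if (y : ℕ) = k then k + 1 else if (y : ℕ) = k + 1 then k else (y : ℕ) := by
        intro y
        rw [hSdef, braidToPerm_sgen hkn]
        have := swap_val (⟨k, by omega⟩ : Fin (n + 1)) ⟨k + 1, by omega⟩ y
        simp only [Fin.ext_iff] at this
        exact this
      have hSp_fix : ∀ x : Fin (n + 1), m + 1 < (x : ℕ) → (S * p) x = x := by
        intro x hx
        rw [Equiv.Perm.mul_apply, hp x hx]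
        apply Fin.ext
        rw [hSval]
        split_ifs <;> omega
      have hj := pc_le hm p hp
      set j := ((p c : Fin (n+1)) : ℕ) with hjdef
      have hj' : (((S * p) c : Fin (n+1)) : ℕ) =
          if j = k then k + 1 else if j = k + 1 then k else j := by
        rw [Equiv.Perm.mul_apply, hSval]
      set q := (braidToPerm n (wordE n j (m + 1)))⁻¹ * p with hqdef
      have hq_fix := q_fix hm p hp
      rw [← hjdef] at hq_fix
      rcases lt_trichotomy (k + 1) j with h1 | h1 | h1
      · -- k + 1 < j : commutation
        have hww : sgen n k * wordE n j (m + 1) = wordE n j (m + 1) * sgen n k :=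
          (commute_wordE_lt (by omega)).eq
        have hcomm : Commute S (braidToPerm n (wordE n j (m + 1))) := by
          have h5 := congrArg (braidToPerm n) hww
          simp only [map_mul] at h5
          rw [← hSdef] at h5
          exact h5
        have hq' : (braidToPerm n (wordE n j (m + 1)))⁻¹ * (S * p) = S * q := by
          rw [hqdef, ← mul_assoc, ← (hcomm.inv_right).eq, mul_assoc]
        have hj'' : (((S * p) c : Fin (n+1)) : ℕ) = j := by rw [hj']; split_ifs <;> omega
        rw [secAux_succ, secAux_succ, hj'', ← hjdef, ← hqdef, hq']
        have hinner := ih (by omega) k (by omega) q hq_fix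
        rw [← hSdef] at hinner
        have he : sgen n k * (wordE n j (m + 1) * secAux n m q) *
            (wordE n j (m + 1) * secAux n m (S * q))⁻¹ =
            wordE n j (m + 1) * (sgen n k * secAux n m q * (secAux n m (S * q))⁻¹) *
              (wordE n j (m + 1))⁻¹ := by
          rw [show sgen n k * (wordE n j (m + 1) * secAux n m q) *
              (wordE n j (m + 1) * secAux n m (S * q))⁻¹
              = (sgen n k * wordE n j (m + 1)) * secAux n m q *
                (secAux n m (S * q))⁻¹ * (wordE n j (m + 1))⁻¹ by group, hww]
          group
        rw [he]
        exact HA_normal.conj_mem _ hinner _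
      · -- k + 1 = j : cancellation
        have hj'' : (((S * p) c : Fin (n+1)) : ℕ) = k := by rw [hj']; split_ifs <;> omega
        have hcons : wordE n k (m + 1) = sgen n k * wordE n (k + 1) (m + 1) :=
          wordE_cons (by omega)
        have hq' : (braidToPerm n (wordE n k (m + 1)))⁻¹ * (S * p) = q := by
          rw [hcons, map_mul, mul_inv_rev, hqdef, ← h1, ← hSdef]
          group
        rw [secAux_succ, secAux_succ, hj'', ← hjdef, ← hqdef, hq', hcons, ← h1]
        rw [show sgen n k * (wordE n (k + 1) (m + 1) * secAux n m q) *
            (sgen n k * wordE n (k + 1) (m + 1) * secAux n m q)⁻¹ = 1 from by group]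
        exact Subgroup.one_mem _
      · rcases eq_or_lt_of_le (show j ≤ k by omega) with h2 | h2
        · -- j = k : produces σ_k²
          have hj'' : (((S * p) c : Fin (n+1)) : ℕ) = k + 1 := by rw [hj']; split_ifs <;> omega
          have hcons : wordE n j (m + 1) = sgen n k * wordE n (k + 1) (m + 1) := by
            rw [h2]
            exact wordE_cons (by omega)
          have hSS : S * S = 1 := by
            rw [hSdef, ← pow_two]
            exact braidToPerm_sgen_sq n k
          have hSinv : S⁻¹ = S := by
            rw [inv_eq_iff_mul_eq_one]
            exact hSS
          have hq' : (braidToPerm n (wordE n (k + 1) (m + 1)))⁻¹ * (S * p) = q := by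
            rw [hqdef, hcons, map_mul, mul_inv_rev, ← hSdef, hSinv]
            group
          rw [secAux_succ, secAux_succ, hj'', ← hjdef, ← hqdef, hq', hcons]
          rw [show sgen n k * (sgen n k * wordE n (k + 1) (m + 1) * secAux n m q) *
              (wordE n (k + 1) (m + 1) * secAux n m q)⁻¹ = sgen n k ^ 2 from by
            simp only [pow_two]; group]
          exact sgen_sq_mem_HA hkn
        · -- j < k : shift down
          have hww : sgen n k * wordE n j (m + 1) = wordE n j (m + 1) * sgen n (k - 1) :=
            sgen_wordE_shift h2 (by omega) hkn
          have hperm : S * braidToPerm n (wordE n j (m + 1)) =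
              braidToPerm n (wordE n j (m + 1)) * braidToPerm n (sgen n (k - 1)) := by
            have h5 := congrArg (braidToPerm n) hww
            simp only [map_mul] at h5
            rw [← hSdef] at h5
            exact h5
          have hq' : (braidToPerm n (wordE n j (m + 1)))⁻¹ * (S * p) =
              braidToPerm n (sgen n (k - 1)) * q := by
            have h3 : (braidToPerm n (wordE n j (m + 1)))⁻¹ * S =
                braidToPerm n (sgen n (k - 1)) * (braidToPerm n (wordE n j (m + 1)))⁻¹ := by
              calc (braidToPerm n (wordE n j (m + 1)))⁻¹ * S
                  = (braidToPerm n (wordE n j (m + 1)))⁻¹ *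
                      (S * braidToPerm n (wordE n j (m + 1))) *
                      (braidToPerm n (wordE n j (m + 1)))⁻¹ := by group
                _ = (braidToPerm n (wordE n j (m + 1)))⁻¹ *
                      (braidToPerm n (wordE n j (m + 1)) * braidToPerm n (sgen n (k - 1))) *
                      (braidToPerm n (wordE n j (m + 1)))⁻¹ := by rw [hperm]
                _ = braidToPerm n (sgen n (k - 1)) *
                      (braidToPerm n (wordE n j (m + 1)))⁻¹ := by group
            rw [hqdef, ← mul_assoc, h3, mul_assoc]
          have hj'' : (((S * p) c : Fin (n+1)) : ℕ) = j := by rw [hj']; split_ifs <;> omega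
          rw [secAux_succ, secAux_succ, hj'', ← hjdef, ← hqdef, hq']
          have hinner := ih (by omega) (k - 1) (by omega) q hq_fix
          have he : sgen n k * (wordE n j (m + 1) * secAux n m q) *
              (wordE n j (m + 1) * secAux n m (braidToPerm n (sgen n (k - 1)) * q))⁻¹ =
              wordE n j (m + 1) * (sgen n (k - 1) * secAux n m q *
                (secAux n m (braidToPerm n (sgen n (k - 1)) * q))⁻¹) *
                (wordE n j (m + 1))⁻¹ := by
            rw [show sgen n k * (wordE n j (m + 1) * secAux n m q) *
                (wordE n j (m + 1) * secAux n m (braidToPerm n (sgen n (k - 1)) * q))⁻¹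
                = (sgen n k * wordE n j (m + 1)) * secAux n m q *
                  (secAux n m (braidToPerm n (sgen n (k - 1)) * q))⁻¹ *
                  (wordE n j (m + 1))⁻¹ by group, hww]
            group
          rw [he]
          exact HA_normal.conj_mem _ hinner _

lemma descend_mem (g : BraidGroup n) :
    g * (secAux n n (braidToPerm n g))⁻¹ ∈ HA n := by
  have hg : g ∈ Subgroup.closure (Set.range (braidGen : Fin n → BraidGroup n)) := by
    rw [closure_braidGen_top]
    trivial
  have step : ∀ i : Fin n, ∀ y : BraidGroup n,
      y * (secAux n n (braidToPerm n y))⁻¹ ∈ HA n →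
      (braidGen i * y) * (secAux n n (braidToPerm n (braidGen i * y)))⁻¹ ∈ HA n := by
    intro i y hy
    have hbg : braidGen i = sgen n (i : ℕ) := by rw [sgen, dif_pos i.isLt]
    have hkey := key_lemma n (le_refl n) (i : ℕ) i.isLt (braidToPerm n y)
      (fun x hx => absurd x.isLt (by omega))
    have he : (braidGen i * y) * (secAux n n (braidToPerm n (braidGen i * y)))⁻¹ =
        (sgen n (i : ℕ) * (y * (secAux n n (braidToPerm n y))⁻¹) * (sgen n (i : ℕ))⁻¹) *
          (sgen n (i : ℕ) * secAux n n (braidToPerm n y) *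
            (secAux n n (braidToPerm n (sgen n (i : ℕ)) * braidToPerm n y))⁻¹) := by
      rw [hbg, map_mul]
      group
    rw [he]
    exact Subgroup.mul_mem _ (HA_normal.conj_mem _ hy _) hkey
  induction hg using Subgroup.closure_induction_left with
  | one =>
      rw [map_one, secAux_one n (le_refl n), inv_one, mul_one]
      exact Subgroup.one_mem _
  | mul_left x hx y hy ih =>
      obtain ⟨i, rfl⟩ := hx
      exact step i y ih
  | inv_mul_cancel x hx y hy ih =>
      obtain ⟨i, rfl⟩ := hx
      have hbg : braidGen i = sgen n (i : ℕ) := by rw [sgen, dif_pos i.isLt]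
      have h1 := step i y ih
      have hsq : braidToPerm n (sgen n (i : ℕ) ^ 2) = 1 := by
        rw [map_pow]
        exact braidToPerm_sgen_sq n (i : ℕ)
      have he : (braidGen i)⁻¹ * y = (sgen n (i : ℕ) ^ 2)⁻¹ * (braidGen i * y) := by
        rw [hbg]
        simp only [pow_two]
        group
      rw [he]
      have hperm : braidToPerm n ((sgen n (i : ℕ) ^ 2)⁻¹ * (braidGen i * y)) =
          braidToPerm n (braidGen i * y) := by
        rw [map_mul, map_inv, hsq]
        group
      rw [hperm]
      rw [show (sgen n (i : ℕ) ^ 2)⁻¹ * (braidGen i * y) *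
          (secAux n n (braidToPerm n (braidGen i * y)))⁻¹
          = (sgen n (i : ℕ) ^ 2)⁻¹ * ((braidGen i * y) *
            (secAux n n (braidToPerm n (braidGen i * y)))⁻¹) by group]
      exact Subgroup.mul_mem _ (Subgroup.inv_mem _ (sgen_sq_mem_HA i.isLt)) h1

lemma pure_eq_HA : PureBraidGroup n = HA n := by
  apply le_antisymm
  · intro g hg
    have h1 := descend_mem g
    rw [show braidToPerm n g = 1 from hg, secAux_one n (le_refl n), inv_one, mul_one] at h1
    exact h1
  · exact HA_le_ker

end BraidAux
namespace BraidAux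

open Multiplicative

variable {n : ℕ}

/-- The "crossing counting" module: one `ℤ` for each ordered pair of strands. -/
abbrev NN (n : ℕ) := (Fin (n + 1) × Fin (n + 1)) → Multiplicative ℤ

/-- indicator of the ordered pair `(u, v)`. -/
def eInd (u v : Fin (n + 1)) : NN n := fun p => if p = (u, v) then ofAdd 1 else 1

def actEquiv (g : Equiv.Perm (Fin (n + 1))) : NN n ≃* NN n where
  toFun f := fun p => f (g⁻¹ p.1, g⁻¹ p.2)
  invFun f := fun p => f (g p.1, g p.2)
  left_inv f := by funext p; simp
  right_inv f := by funext p; simp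
  map_mul' f1 f2 := rfl

def permAct (n : ℕ) : Equiv.Perm (Fin (n + 1)) →* MulAut (NN n) where
  toFun := actEquiv
  map_one' := by
    apply MulEquiv.ext
    intro f
    funext p
    simp [actEquiv]
  map_mul' g h := by
    apply MulEquiv.ext
    intro f
    funext p
    simp [actEquiv, MulAut.mul_apply, mul_inv_rev, Equiv.Perm.mul_apply]

lemma permAct_apply (g : Equiv.Perm (Fin (n + 1))) (f : NN n) (p : Fin (n + 1) × Fin (n + 1)) :
    permAct n g f p = f (g⁻¹ p.1, g⁻¹ p.2) := rfl

lemma permAct_eInd (g : Equiv.Perm (Fin (n + 1))) (u v : Fin (n + 1)) :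
    permAct n g (eInd u v) = eInd (g u) (g v) := by
  funext p
  rw [permAct_apply, eInd, eInd]
  congr 1
  simp only [Prod.ext_iff, eq_iff_iff]
  constructor
  · rintro ⟨h1, h2⟩
    constructor
    · rw [← h1]; simp
    · rw [← h2]; simp
  · rintro ⟨h1, h2⟩
    constructor
    · rw [h1]; simp
    · rw [h2]; simp

/-- The crossing-counting homomorphism `B_{n+1} → NN ⋊ S_{n+1}`. -/
def lkHom (n : ℕ) : BraidGroup n →* NN n ⋊[permAct n] Equiv.Perm (Fin (n + 1)) :=
  PresentedGroup.toGroup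
    (f := fun i : Fin n =>
      ⟨eInd i.castSucc i.succ, Equiv.swap i.castSucc i.succ⟩) (by
    rintro r (⟨i, j, hij, rfl⟩ | ⟨i, j, hij, rfl⟩) <;>
      simp only [map_mul, map_inv, FreeGroup.lift_apply_of, mul_inv_eq_one]
    · -- braid relation
      set a := i.castSucc
      set b := i.succ
      set d := j.succ
      have hcb : j.castSucc = b := by
        simp only [Fin.ext_iff, Fin.coe_castSucc, Fin.val_succ, a, b] at *; omega
      rw [hcb]
      have hab : a ≠ b := by simp [a, b, Fin.ext_iff]
      have had : a ≠ d := by simp [a, d, Fin.ext_iff]; omega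
      have hdb : d ≠ b := by simp [d, b, Fin.ext_iff]; omega
      have hda : d ≠ a := had.symm
      have hperm : Equiv.swap a b * Equiv.swap b d * Equiv.swap a b =
          Equiv.swap b d * Equiv.swap a b * Equiv.swap b d := by
        calc Equiv.swap a b * Equiv.swap b d * Equiv.swap a b
            = Equiv.swap b a * Equiv.swap d b * Equiv.swap b a := by
              rw [Equiv.swap_comm a b, Equiv.swap_comm b d]
          _ = Equiv.swap a d := Equiv.swap_mul_swap_mul_swap hdb hda
          _ = Equiv.swap d a := Equiv.swap_comm a d
          _ = Equiv.swap b d * Equiv.swap a b * Equiv.swap b d :=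
              (Equiv.swap_mul_swap_mul_swap hab had).symm
      ext : 1
      · -- left components
        show eInd a b * permAct n (Equiv.swap a b) (eInd b d) *
            permAct n (Equiv.swap a b * Equiv.swap b d) (eInd a b) =
          eInd b d * permAct n (Equiv.swap b d) (eInd a b) *
            permAct n (Equiv.swap b d * Equiv.swap a b) (eInd b d)
        rw [permAct_eInd, permAct_eInd, permAct_eInd, permAct_eInd]
        have h2 : Equiv.swap a b d = d := Equiv.swap_apply_of_ne_of_ne hda hdb
        have h5 : Equiv.swap b d a = a := Equiv.swap_apply_of_ne_of_ne hab had
        have h1 : Equiv.swap a b b = a := Equiv.swap_apply_right a b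
        have h6 : Equiv.swap b d b = d := Equiv.swap_apply_left b d
        have h3 : (Equiv.swap a b * Equiv.swap b d) a = b := by
          rw [Equiv.Perm.mul_apply, h5, Equiv.swap_apply_left]
        have h4 : (Equiv.swap a b * Equiv.swap b d) b = d := by
          rw [Equiv.Perm.mul_apply, h6, h2]
        have h7 : (Equiv.swap b d * Equiv.swap a b) b = a := by
          rw [Equiv.Perm.mul_apply, h1, h5]
        have h8 : (Equiv.swap b d * Equiv.swap a b) d = b := by
          rw [Equiv.Perm.mul_apply, h2, Equiv.swap_apply_right]
        rw [h1, h2, h3, h4, h5, h6, h7, h8]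
        simp [mul_comm, mul_left_comm, mul_assoc]
      · -- right components
        exact hperm
    · -- commutation relation
      have hic : ((i.castSucc : Fin (n + 1)) : ℕ) = (i : ℕ) := rfl
      have hd : ∀ x : Fin (n + 1),
          x = j.castSucc ∨ x = j.succ → Equiv.swap i.castSucc i.succ x = x := by
        intro x hx
        apply Equiv.swap_apply_of_ne_of_ne <;>
          (rcases hx with hx | hx <;> subst hx <;> simp [Fin.ext_iff] <;> omega)
      have hd' : ∀ x : Fin (n + 1),
          x = i.castSucc ∨ x = i.succ → Equiv.swap j.castSucc j.succ x = x := by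
        intro x hx
        apply Equiv.swap_apply_of_ne_of_ne <;>
          (rcases hx with hx | hx <;> subst hx <;> simp [Fin.ext_iff] <;> omega)
      ext : 1
      · show eInd i.castSucc i.succ *
            permAct n (Equiv.swap i.castSucc i.succ) (eInd j.castSucc j.succ) =
          eInd j.castSucc j.succ *
            permAct n (Equiv.swap j.castSucc j.succ) (eInd i.castSucc i.succ)
        rw [permAct_eInd, permAct_eInd, hd _ (Or.inl rfl), hd _ (Or.inr rfl),
          hd' _ (Or.inl rfl), hd' _ (Or.inr rfl), mul_comm]
      · show Equiv.swap i.castSucc i.succ * Equiv.swap j.castSucc j.succ =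
          Equiv.swap j.castSucc j.succ * Equiv.swap i.castSucc i.succ
        have hdisj : (Equiv.swap i.castSucc i.succ).Disjoint
            (Equiv.swap j.castSucc j.succ) := by
          intro x
          by_cases hx : x = i.castSucc ∨ x = i.succ
          · right; exact hd' x hx
          · push_neg at hx
            left
            exact Equiv.swap_apply_of_ne_of_ne hx.1 hx.2
        exact hdisj.commute.eq)

lemma lkHom_right (g : BraidGroup n) : (lkHom n g).right = braidToPerm n g := by
  have hcomp : SemidirectProduct.rightHom.comp (lkHom n) = braidToPerm n := by
    ext x
    simp [lkHom, braidToPerm, PresentedGroup.toGroup.of]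
  exact DFunLike.congr_fun hcomp g

/-- crossing numbers of a braid. -/
def crossing (g : BraidGroup n) : NN n := (lkHom n g).left

lemma crossing_mul (g h : BraidGroup n) :
    crossing (g * h) = crossing g * permAct n (braidToPerm n g) (crossing h) := by
  rw [crossing, map_mul, SemidirectProduct.mul_left, lkHom_right]
  rfl

lemma crossing_one : crossing (1 : BraidGroup n) = 1 := by
  rw [crossing, map_one]
  rfl

lemma crossing_conj (g u : BraidGroup n) (hu : braidToPerm n u = 1) :
    crossing (g * u * g⁻¹) = permAct n (braidToPerm n g) (crossing u) := by
  have hyr : (lkHom n u).right = 1 := by rw [lkHom_right, hu]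
  rw [crossing, map_mul, map_mul, SemidirectProduct.mul_left, SemidirectProduct.mul_left,
    SemidirectProduct.mul_right, map_inv, SemidirectProduct.inv_left, hyr, mul_one]
  have hback : permAct n (lkHom n g).right (permAct n ((lkHom n g).right)⁻¹
      ((lkHom n g).left⁻¹)) = (lkHom n g).left⁻¹ := by
    rw [← MulAut.mul_apply, ← map_mul, mul_inv_cancel, map_one, MulAut.one_apply]
  rw [hback, lkHom_right]
  rw [mul_comm ((lkHom n g).left) _, mul_assoc, mul_inv_cancel, mul_one]
  rfl

lemma crossing_sgen {k : ℕ} (hk : k < n) :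
    crossing (sgen n k) = eInd (⟨k, by omega⟩ : Fin (n + 1)) ⟨k + 1, by omega⟩ := by
  rw [sgen, dif_pos hk]
  show (lkHom n (PresentedGroup.of ⟨k, hk⟩)).left = _
  rw [lkHom, PresentedGroup.toGroup.of]
  rfl

lemma braidToPerm_sgen_pow_two (k : ℕ) : braidToPerm n (sgen n k ^ 2) = 1 := by
  rw [map_pow]
  exact braidToPerm_sgen_sq n k

lemma crossing_sgen_sq {k : ℕ} (hk : k < n) :
    crossing (sgen n k ^ 2) =
      eInd (⟨k, by omega⟩ : Fin (n + 1)) ⟨k + 1, by omega⟩ *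
        eInd (⟨k + 1, by omega⟩ : Fin (n + 1)) ⟨k, by omega⟩ := by
  rw [pow_two, crossing_mul, crossing_sgen hk, braidToPerm_sgen hk, permAct_eInd,
    Equiv.swap_apply_left, Equiv.swap_apply_right]

lemma crossing_Agen {a b : ℕ} (hab : a < b) (hb : b ≤ n) :
    crossing (Agen n a b) =
      eInd (⟨a, by omega⟩ : Fin (n + 1)) ⟨b, by omega⟩ *
        eInd (⟨b, by omega⟩ : Fin (n + 1)) ⟨a, by omega⟩ := by
  rw [Agen, crossing_conj _ _ (braidToPerm_sgen_pow_two a), crossing_sgen_sq (by omega),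
    map_mul, permAct_eInd, permAct_eInd]
  obtain ⟨h1, h2⟩ := conjPerm_vals (n := n) (a := a) (b := b) hab hb
  rw [h1, h2]

end BraidAux
namespace BraidAux

open Multiplicative

variable {n : ℕ}

lemma crossing_wordE : ∀ d : ℕ, ∀ i : ℕ, i + d ≤ n →
    crossing (wordE n i (i + d)) = fun p : Fin (n + 1) × Fin (n + 1) =>
      if (p.1 : ℕ) = i ∧ i < (p.2 : ℕ) ∧ (p.2 : ℕ) ≤ i + d then ofAdd 1 else 1 := by
  intro d
  induction d with
  | zero =>
      intro i hi
      rw [Nat.add_zero, wordE_nil (le_refl i), crossing_one]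
      funext p
      rw [if_neg (by omega)]
      rfl
  | succ d ih =>
      intro i hi
      rw [show i + (d + 1) = i + 1 + d by omega, wordE_cons (by omega), crossing_mul,
        ih (i + 1) (by omega), crossing_sgen (by omega), braidToPerm_sgen (by omega)]
      funext p
      rw [Pi.mul_apply, permAct_apply, Equiv.swap_inv]
      have hs1 := swap_val (⟨i, by omega⟩ : Fin (n + 1)) ⟨i + 1, by omega⟩ p.1
      have hs2 := swap_val (⟨i, by omega⟩ : Fin (n + 1)) ⟨i + 1, by omega⟩ p.2
      simp only [Fin.ext_iff] at hs1 hs2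
      rw [eInd]
      have hp : (p = ((⟨i, by omega⟩ : Fin (n + 1)), (⟨i + 1, by omega⟩ : Fin (n + 1)))) =
          ((p.1 : ℕ) = i ∧ (p.2 : ℕ) = i + 1) := by
        simp [Prod.ext_iff, Fin.ext_iff]
      dsimp only
      simp only [hp, hs1, hs2]
      split_ifs <;> (try rw [one_mul]) <;> (try rw [mul_one]) <;>
        first | rfl | (exfalso; omega)

lemma gamma_pow_val : ∀ r, r ≤ n →
    ((((braidToPerm n (wordE n 0 n)) ^ r) 0 : Fin (n + 1)) : ℕ) = r := by
  intro r
  induction r with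
  | zero => intro _; rfl
  | succ r ih =>
      intro hr
      rw [pow_succ', Equiv.Perm.mul_apply]
      have h2 := permE_val (n := n) (i := 0) (m := n) (by omega) (le_refl n)
        (((braidToPerm n (wordE n 0 n)) ^ r) 0)
      rw [ih (by omega)] at h2
      rw [h2, if_neg (by omega), if_pos (by omega)]

lemma crossing_cB :
    crossing (wordE n 0 n) = fun p : Fin (n + 1) × Fin (n + 1) =>
      if (p.1 : ℕ) = 0 ∧ (p.1 : ℕ) ≠ (p.2 : ℕ) then ofAdd 1 else 1 := by
  have h := crossing_wordE (n := n) n 0 (by omega)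
  rw [Nat.zero_add] at h
  rw [h]
  funext p
  have h2 := p.2.isLt
  split_ifs <;> first | rfl | (exfalso; omega)

lemma crossing_cB_pow : ∀ r, r ≤ n + 1 →
    crossing ((wordE n 0 n) ^ r) = fun p : Fin (n + 1) × Fin (n + 1) =>
      if (p.1 : ℕ) < r ∧ (p.1 : ℕ) ≠ (p.2 : ℕ) then ofAdd 1 else 1 := by
  intro r
  induction r with
  | zero =>
      intro _
      rw [pow_zero, crossing_one]
      funext p
      rw [if_neg (by omega)]
      rfl
  | succ r ih =>
      intro hr
      rw [pow_succ, crossing_mul, ih (by omega), map_pow, crossing_cB]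
      funext p
      rw [Pi.mul_apply, permAct_apply]
      set g := (braidToPerm n (wordE n 0 n)) ^ r with hg
      have key : ∀ x : Fin (n + 1), ((g⁻¹ x : Fin (n + 1)) : ℕ) = 0 ↔ (x : ℕ) = r := by
        intro x
        have hval := gamma_pow_val (n := n) r (by omega)
        rw [← hg] at hval
        constructor
        · intro hx
          have h0 : g⁻¹ x = 0 := Fin.ext (by simpa using hx)
          have : x = g 0 := by rw [← h0, Equiv.Perm.inv_def, Equiv.apply_symm_apply]
          rw [this, hval]
        · intro hx
          have : x = g 0 := Fin.ext (by rw [hval]; exact hx)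
          rw [this, Equiv.Perm.inv_def, Equiv.symm_apply_apply]
          rfl
      have key2 : (((g⁻¹ p.1 : Fin (n + 1)) : ℕ) ≠ ((g⁻¹ p.2 : Fin (n + 1)) : ℕ)) ↔
          ((p.1 : ℕ) ≠ (p.2 : ℕ)) := by
        rw [not_iff_not]
        constructor
        · intro h
          have : g⁻¹ p.1 = g⁻¹ p.2 := Fin.ext h
          have := g⁻¹.injective this
          rw [this]
        · intro h
          have : p.1 = p.2 := Fin.ext h
          rw [this]
      rw [if_congr (and_congr (key p.1) key2) rfl rfl]
      split_ifs <;> (try rw [one_mul]) <;> (try rw [mul_one]) <;>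
        first | rfl | (exfalso; omega)

lemma fullTwist_eq : fullTwist n = (wordE n 0 n) ^ (n + 1) := by
  rw [fullTwist]
  congr 1
  rw [wordE, Nat.sub_zero]
  congr 1
  apply List.ext_getElem
  · simp
  · intro k h1 h2
    simp only [List.getElem_ofFn]
    rw [List.getElem_map, List.getElem_range']
    simp only [List.length_ofFn] at h1
    rw [show 0 + 1 * k = k by omega, sgen, dif_pos (by simpa using h2)]

lemma crossing_fullTwist :
    crossing (fullTwist n) = fun p : Fin (n + 1) × Fin (n + 1) =>
      if (p.1 : ℕ) ≠ (p.2 : ℕ) then ofAdd 1 else 1 := by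
  rw [fullTwist_eq, crossing_cB_pow (n + 1) (le_refl _)]
  funext p
  have := p.1.isLt
  split_ifs <;> first | rfl | (exfalso; omega)

/-! centrality of the full twist -/

lemma c_sgen_shift {k : ℕ} (h : k + 1 < n) :
    wordE n 0 n * sgen n k = sgen n (k + 1) * wordE n 0 n := by
  have h1 := sgen_wordE_shift (n := n) (i := 0) (m := n) (k := k + 1) (by omega) h h
  rw [Nat.add_sub_cancel] at h1
  exact h1.symm

/-- the extra generator `τ` in the cycling of conjugation by `c`. -/
def tauB (n : ℕ) : BraidGroup n := (wordE n 1 n)⁻¹ * sgen n 0 * wordE n 1 n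

lemma c_tau (hn : 1 ≤ n) : wordE n 0 n * sgen n (n - 1) = tauB n * wordE n 0 n := by
  have hb := band_lemma (n := n) (i := 0) (j := n - 1) (by omega) (by omega)
  rw [show n - 1 + 1 = n by omega] at hb
  have hsnoc : wordE n 0 n = wordE n 0 (n - 1) * sgen n (n - 1) := wordE_snoc (by omega)
  rw [tauB, ← hb, hsnoc]
  group

lemma c_tau2 (hn : 1 ≤ n) : wordE n 0 n * tauB n = sgen n 0 * wordE n 0 n := by
  have hcons : wordE n 0 n = sgen n 0 * wordE n 1 n := wordE_cons (by omega)
  rw [tauB, hcons]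
  group

lemma c_pow_shift : ∀ j k : ℕ, k + j + 1 ≤ n →
    wordE n 0 n ^ j * sgen n k = sgen n (k + j) * wordE n 0 n ^ j := by
  intro j
  induction j with
  | zero => intro k _; simp
  | succ j ih =>
      intro k hk
      have h1 : wordE n 0 n * sgen n k = sgen n (k + 1) * wordE n 0 n :=
        c_sgen_shift (by omega)
      calc wordE n 0 n ^ (j + 1) * sgen n k
          = wordE n 0 n ^ j * (wordE n 0 n * sgen n k) := by rw [pow_succ]; group
        _ = wordE n 0 n ^ j * sgen n (k + 1) * wordE n 0 n := by rw [h1]; group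
        _ = sgen n (k + 1 + j) * wordE n 0 n ^ j * wordE n 0 n := by rw [ih (k + 1) (by omega)]
        _ = sgen n (k + (j + 1)) * wordE n 0 n ^ (j + 1) := by
            rw [show k + 1 + j = k + (j + 1) by omega, pow_succ]
            group

lemma fullTwist_comm_sgen {k : ℕ} (hk : k < n) :
    Commute (fullTwist n) (sgen n k) := by
  show fullTwist n * sgen n k = sgen n k * fullTwist n
  rw [fullTwist_eq]
  have hsplit : wordE n 0 n ^ (n + 1) =
      wordE n 0 n ^ k * wordE n 0 n * wordE n 0 n * wordE n 0 n ^ (n - 1 - k) := by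
    rw [← pow_succ, ← pow_succ, ← pow_add]
    congr 1
    omega
  have h1 : wordE n 0 n ^ (n - 1 - k) * sgen n k = sgen n (n - 1) * wordE n 0 n ^ (n - 1 - k) := by
    have := c_pow_shift (n := n) (n - 1 - k) k (by omega)
    rw [show k + (n - 1 - k) = n - 1 by omega] at this
    exact this
  have h4 : wordE n 0 n ^ k * sgen n 0 = sgen n k * wordE n 0 n ^ k := by
    have := c_pow_shift (n := n) k 0 (by omega)
    rw [Nat.zero_add] at this
    exact this
  calc wordE n 0 n ^ (n + 1) * sgen n k
      = wordE n 0 n ^ k * wordE n 0 n * wordE n 0 n *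
          (wordE n 0 n ^ (n - 1 - k) * sgen n k) := by rw [hsplit]; group
    _ = wordE n 0 n ^ k * wordE n 0 n * (wordE n 0 n * sgen n (n - 1)) *
          wordE n 0 n ^ (n - 1 - k) := by rw [h1]; group
    _ = wordE n 0 n ^ k * (wordE n 0 n * tauB n) * wordE n 0 n *
          wordE n 0 n ^ (n - 1 - k) := by rw [c_tau (by omega)]; group
    _ = (wordE n 0 n ^ k * sgen n 0) * wordE n 0 n * wordE n 0 n *
          wordE n 0 n ^ (n - 1 - k) := by rw [c_tau2 (by omega)]; group
    _ = sgen n k * wordE n 0 n ^ (n + 1) := by rw [h4, hsplit]; group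

lemma fullTwist_central (g : BraidGroup n) : Commute (fullTwist n) g := by
  have hg : g ∈ Subgroup.closure (Set.range (braidGen : Fin n → BraidGroup n)) := by
    rw [closure_braidGen_top]
    trivial
  induction hg using Subgroup.closure_induction with
  | mem x hx =>
      obtain ⟨i, rfl⟩ := hx
      have hbg : braidGen i = sgen n (i : ℕ) := by rw [sgen, dif_pos i.isLt]
      rw [hbg]
      exact fullTwist_comm_sgen i.isLt
  | one => exact Commute.one_right _
  | mul x y _ _ hx hy => exact hx.mul_right hy
  | inv x _ hx => exact hx.inv_right

end BraidAux
namespace BraidAux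

open Multiplicative

variable {n : ℕ}

/-- weight of an ordered pair. -/
def wt (t : ℕ → ℕ → ℤ) (p : Fin (n + 1) × Fin (n + 1)) : ℤ :=
  if (p.1 : ℕ) < (p.2 : ℕ) then t (p.1 : ℕ) (p.2 : ℕ) else 0

def Wsum (t : ℕ → ℕ → ℤ) : NN n →* Multiplicative ℤ where
  toFun f := ofAdd (∑ p : Fin (n + 1) × Fin (n + 1), wt t p * (f p).toAdd)
  map_one' := by simp
  map_mul' f g := by
    rw [← ofAdd_add]
    congr 1
    rw [← Finset.sum_add_distrib]
    apply Finset.sum_congr rfl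
    intro p _
    rw [Pi.mul_apply, toAdd_mul]
    ring

lemma Wsum_eInd (t : ℕ → ℕ → ℤ) (u v : Fin (n + 1)) :
    Wsum (n := n) t (eInd u v) = ofAdd (wt t (u, v)) := by
  have h1 : ∀ p : Fin (n + 1) × Fin (n + 1),
      wt t p * ((eInd u v p).toAdd) = if p = (u, v) then wt t (u, v) else 0 := by
    intro p
    rw [eInd]
    split_ifs with h
    · rw [h]; simp
    · simp
  calc Wsum t (eInd u v)
      = ofAdd (∑ p : Fin (n + 1) × Fin (n + 1), wt t p * ((eInd u v p).toAdd)) := rfl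
    _ = ofAdd (∑ p : Fin (n + 1) × Fin (n + 1), if p = (u, v) then wt t (u, v) else 0) := by
        rw [Finset.sum_congr rfl (fun p _ => h1 p)]
    _ = ofAdd (wt t (u, v)) := by
        rw [Finset.sum_ite_eq' Finset.univ (u, v) (fun _ => wt t (u, v)),
          if_pos (Finset.mem_univ _)]

/-- The transvection exponent homomorphism `P_{n+1} → ℤ`. -/
def phiM (t : ℕ → ℕ → ℤ) : ↥(PureBraidGroup n) →* Multiplicative ℤ where
  toFun x := Wsum t (crossing (x : BraidGroup n))
  map_one' := by
    rw [show ((1 : ↥(PureBraidGroup n)) : BraidGroup n) = 1 from rfl, crossing_one, map_one]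
  map_mul' x y := by
    rw [show ((x * y : ↥(PureBraidGroup n)) : BraidGroup n) =
        (x : BraidGroup n) * (y : BraidGroup n) from rfl,
      crossing_mul, show braidToPerm n (x : BraidGroup n) = 1 from MonoidHom.mem_ker.mp x.2,
      map_one, MulAut.one_apply, map_mul]

lemma phiM_pureGen (t : ℕ → ℕ → ℤ) {a b : ℕ} (hab : a < b) (hb : b ≤ n) :
    phiM (n := n) t (pureGen n a b) = ofAdd (t a b) := by
  show Wsum t (crossing (Agen n a b)) = _
  rw [crossing_Agen hab hb, map_mul, Wsum_eInd, Wsum_eInd, ← ofAdd_add]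
  congr 1
  rw [wt, wt]
  dsimp only
  rw [if_pos (by exact hab), if_neg (by omega)]
  ring

lemma phiM_pureTwist (t : ℕ → ℕ → ℤ) :
    phiM (n := n) t (pureTwist n) =
      ofAdd (∑ b ∈ Finset.range (n + 1), ∑ a ∈ Finset.range b, t a b) := by
  show Wsum t (crossing (fullTwist n)) = _
  rw [crossing_fullTwist]
  have h1 : ∀ p : Fin (n + 1) × Fin (n + 1),
      wt t p * (((if (p.1 : ℕ) ≠ (p.2 : ℕ) then (ofAdd 1 : Multiplicative ℤ) else 1)).toAdd)
        = wt t p := by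
    intro p
    by_cases h : (p.1 : ℕ) = (p.2 : ℕ)
    · rw [if_neg (by omega), wt, if_neg (by omega)]
      simp
    · rw [if_pos h]
      simp
  calc Wsum t (fun p : Fin (n + 1) × Fin (n + 1) =>
        if (p.1 : ℕ) ≠ (p.2 : ℕ) then (ofAdd 1 : Multiplicative ℤ) else 1)
      = ofAdd (∑ p : Fin (n + 1) × Fin (n + 1), wt t p *
          (((if (p.1 : ℕ) ≠ (p.2 : ℕ) then (ofAdd 1 : Multiplicative ℤ) else 1)).toAdd)) := rfl
    _ = ofAdd (∑ p : Fin (n + 1) × Fin (n + 1), wt t p) := by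
        rw [Finset.sum_congr rfl (fun p _ => h1 p)]
    _ = ofAdd (∑ b ∈ Finset.range (n + 1), ∑ a ∈ Finset.range b, t a b) := by
        congr 1
        rw [Fintype.sum_prod_type, Finset.sum_comm]
        have h2 : ∀ v : Fin (n + 1),
            (∑ u : Fin (n + 1), wt t (u, v)) = ∑ a ∈ Finset.range (v : ℕ), t a (v : ℕ) := by
          intro v
          have h3 : ∀ u : Fin (n + 1),
              wt t (u, v) = if (u : ℕ) < (v : ℕ) then t (u : ℕ) (v : ℕ) else 0 := fun u => rfl
          rw [Finset.sum_congr rfl (fun u _ => h3 u),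
            Fin.sum_univ_eq_sum_range (fun i => if i < (v : ℕ) then t i (v : ℕ) else 0) (n + 1),
            ← Finset.sum_filter]
          congr 1
          ext x
          simp only [Finset.mem_filter, Finset.mem_range]
          constructor
          · rintro ⟨_, h⟩; omega
          · intro h
            have := v.isLt
            exact ⟨by omega, by omega⟩
        rw [Finset.sum_congr rfl (fun v _ => h2 v),
          Fin.sum_univ_eq_sum_range (fun j => ∑ a ∈ Finset.range j, t a j) (n + 1)]

lemma pureTwist_ne_one (hn : 1 ≤ n) : (pureTwist n) ≠ (1 : ↥(PureBraidGroup n)) := by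
  intro h
  have h1 : fullTwist n = 1 := congrArg Subtype.val h
  have h2 := crossing_fullTwist (n := n)
  rw [h1, crossing_one] at h2
  have h3 := congrFun h2 ((⟨0, by omega⟩ : Fin (n + 1)), (⟨1, by omega⟩ : Fin (n + 1)))
  rw [Pi.one_apply, if_pos (by dsimp only; omega)] at h3
  have h4 := congrArg toAdd h3
  simp at h4

lemma pureTwist_commute (y : ↥(PureBraidGroup n)) : Commute (pureTwist n) y := by
  have h := (fullTwist_central (n := n) (y : BraidGroup n)).eq
  show pureTwist n * y = y * pureTwist n
  apply Subtype.ext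
  rw [Subgroup.coe_mul, Subgroup.coe_mul]
  exact h

/-- The transvection endomorphism `x ↦ x ⬝ z^{φ(x)}`. -/
def rho0 (t : ℕ → ℕ → ℤ) : ↥(PureBraidGroup n) →* ↥(PureBraidGroup n) where
  toFun x := x * pureTwist n ^ (phiM t x).toAdd
  map_one' := by
    rw [map_one]
    simp
  map_mul' x y := by
    rw [map_mul, toAdd_mul, zpow_add]
    have hc := ((pureTwist_commute y).zpow_left ((phiM t x).toAdd)).eq
    rw [show x * y * (pureTwist n ^ (phiM t x).toAdd * pureTwist n ^ (phiM t y).toAdd)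
        = x * (y * pureTwist n ^ (phiM t x).toAdd) * pureTwist n ^ (phiM t y).toAdd by group,
      ← hc]
    group

lemma rho0_apply (t : ℕ → ℕ → ℤ) (x : ↥(PureBraidGroup n)) :
    rho0 t x = x * pureTwist n ^ (phiM t x).toAdd := rfl

lemma rho0_pureGen (t : ℕ → ℕ → ℤ) {a b : ℕ} (hab : a < b) (hb : b ≤ n) :
    rho0 (n := n) t (pureGen n a b) = pureGen n a b * pureTwist n ^ t a b := by
  rw [rho0_apply, phiM_pureGen t hab hb, toAdd_ofAdd]

lemma rho0_unique (t : ℕ → ℕ → ℤ) (ρ : ↥(PureBraidGroup n) →* ↥(PureBraidGroup n))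
    (hρ : ∀ a b : ℕ, a < b → b ≤ n →
      ρ (pureGen n a b) = pureGen n a b * pureTwist n ^ t a b) :
    ρ = rho0 t := by
  apply MonoidHom.ext
  rintro ⟨v, hv⟩
  have hx : v ∈ HA n := by rw [← pure_eq_HA]; exact hv
  revert hv
  show ∀ hv : v ∈ PureBraidGroup n,
      ρ ⟨v, hv⟩ = rho0 t ⟨v, hv⟩
  induction hx using Subgroup.closure_induction with
    | mem w hw =>
        intro hv
        obtain ⟨a, b, hab, hb, rfl⟩ := hw
        have he : (⟨Agen n a b, hv⟩ : ↥(PureBraidGroup n)) = pureGen n a b := rfl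
        rw [he, hρ a b hab hb, rho0_pureGen t hab hb]
    | one =>
        intro hv
        have he : (⟨1, hv⟩ : ↥(PureBraidGroup n)) = 1 := rfl
        rw [he, map_one, map_one]
    | mul w1 w2 hw1 hw2 ih1 ih2 =>
        intro hv
        have h1 : w1 ∈ PureBraidGroup n := HA_le_ker hw1
        have h2 : w2 ∈ PureBraidGroup n := HA_le_ker hw2
        have he : (⟨w1 * w2, hv⟩ : ↥(PureBraidGroup n)) = ⟨w1, h1⟩ * ⟨w2, h2⟩ := rfl
        rw [he, map_mul, map_mul, ih1 h1, ih2 h2]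
    | inv w hw ih =>
        intro hv
        have h1 : w ∈ PureBraidGroup n := HA_le_ker hw
        have he : (⟨w⁻¹, hv⟩ : ↥(PureBraidGroup n)) = (⟨w, h1⟩ : ↥(PureBraidGroup n))⁻¹ := rfl
        rw [he, map_inv, map_inv, ih h1]

end BraidAux

/-- For `n ≥ 3` and any family of integers `t_{a,b}` (indexed here by
`0 ≤ a < b ≤ n`, corresponding to the classical indices `1 ≤ i < j ≤ n+1`), there is a
unique endomorphism `ρ` of the pure braid group `P_{n+1}` with
`ρ(A_{a,b}) = A_{a,b} z^{t_{a,b}}` for all pairs, and `ρ` is injective if and only if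
`1 + Σ t_{a,b} ≠ 0`. -/
theorem pureBraid_transvection_endomorphism
    (n : ℕ) (hn : 3 ≤ n) (t : ℕ → ℕ → ℤ) :
    (∃! ρ : ↥(PureBraidGroup n) →* ↥(PureBraidGroup n),
        ∀ a b : ℕ, a < b → b ≤ n →
          ρ (pureGen n a b) = pureGen n a b * pureTwist n ^ t a b) ∧
    (∀ ρ : ↥(PureBraidGroup n) →* ↥(PureBraidGroup n),
        (∀ a b : ℕ, a < b → b ≤ n →
          ρ (pureGen n a b) = pureGen n a b * pureTwist n ^ t a b) →
        (Function.Injective ρ ↔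
          1 + ∑ b ∈ Finset.range (n + 1), ∑ a ∈ Finset.range b, t a b ≠ 0)) := by
  classical
  constructor
  · exact ⟨BraidAux.rho0 t, fun a b hab hb => BraidAux.rho0_pureGen t hab hb,
      fun ρ hρ => BraidAux.rho0_unique t ρ hρ⟩
  · intro ρ hρ
    rw [BraidAux.rho0_unique t ρ hρ]
    set S := ∑ b ∈ Finset.range (n + 1), ∑ a ∈ Finset.range b, t a b with hS
    have hphiz : (BraidAux.phiM t (pureTwist n)).toAdd = S := by
      rw [BraidAux.phiM_pureTwist, toAdd_ofAdd]
    constructor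
    · intro hinj hcon
      apply BraidAux.pureTwist_ne_one (n := n) (by omega : 1 ≤ n)
      apply hinj
      rw [map_one, BraidAux.rho0_apply, hphiz,
        show pureTwist n * pureTwist n ^ S = pureTwist n ^ (1 + S) by
          rw [zpow_add, zpow_one], hcon, zpow_zero]
    · intro hS0 x y hxy
      have h1 := congrArg (BraidAux.phiM t) hxy
      have key : ∀ z : ↥(PureBraidGroup n), (BraidAux.phiM t (BraidAux.rho0 t z)).toAdd
          = (BraidAux.phiM t z).toAdd * (1 + S) := by
        intro z
        rw [BraidAux.rho0_apply, map_mul, map_zpow, toAdd_mul, toAdd_zpow, hphiz,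
          smul_eq_mul]
        ring
      have h2 : (BraidAux.phiM t x).toAdd * (1 + S) = (BraidAux.phiM t y).toAdd * (1 + S) := by
        rw [← key x, ← key y, h1]
      have h3 : (BraidAux.phiM t x).toAdd = (BraidAux.phiM t y).toAdd :=
        mul_right_cancel₀ hS0 h2
      have h5 : x * pureTwist n ^ (BraidAux.phiM t x).toAdd =
          y * pureTwist n ^ (BraidAux.phiM t x).toAdd := by
        calc x * pureTwist n ^ (BraidAux.phiM t x).toAdd
            = BraidAux.rho0 t x := rfl
          _ = BraidAux.rho0 t y := hxy
          _ = y * pureTwist n ^ (BraidAux.phiM t y).toAdd := rfl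
          _ = y * pureTwist n ^ (BraidAux.phiM t x).toAdd := by rw [h3]
      exact mul_right_cancel h5
end
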